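/- arXiv:1701.04441 — 4 statements merged into one kernel-verified Lean document; each statement's English description precedes it below -/
import Mathlib

section
/- Every non-trivial element r ∈ N has a conjugate r̃ in N such that for every i ∈ ℤ, the reduced word representing r̃ in the free basis B(i) of N is cyclically reduced. -/
/-! Common setup: the one-relator group `H = ⟨x, b, y₁, …, yₙ | [xᵏ,b]u⟩`, where generators are
indexed by `Bool ⊕ Fin n` (`Sum.inl true ↦ x`, `Sum.inl false ↦ b`, `Sum.inr m ↦ yₘ`),
`[xᵏ,b] = x⁻ᵏb⁻¹xᵏb`, and `u` is the image of a word `u'` in the letters `y₁, …, yₙ`. -/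

/-- The single relator `[xᵏ,b]u` of `H`. -/
def relOfH (k n : ℕ) (u' : FreeGroup (Fin n)) : Set (FreeGroup (Bool ⊕ Fin n)) :=
  {((FreeGroup.of (Sum.inl true))⁻¹) ^ k * (FreeGroup.of (Sum.inl false))⁻¹ *
    (FreeGroup.of (Sum.inl true)) ^ k * FreeGroup.of (Sum.inl false) *
    FreeGroup.map Sum.inr u'}

/-- The one-relator group `H = ⟨x, b, y₁, …, yₙ | [xᵏ,b]u⟩`. -/
abbrev Hgp (k n : ℕ) (u' : FreeGroup (Fin n)) : Type :=
  PresentedGroup (relOfH k n u')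

/-- The generator `x` of `H`. -/
def xg (k n : ℕ) (u' : FreeGroup (Fin n)) : Hgp k n u' := PresentedGroup.of (Sum.inl true)

/-- The generator `b` of `H`. -/
def bg (k n : ℕ) (u' : FreeGroup (Fin n)) : Hgp k n u' := PresentedGroup.of (Sum.inl false)

/-- The generator `yₘ` of `H`. -/
def yg (k n : ℕ) (u' : FreeGroup (Fin n)) (m : Fin n) : Hgp k n u' :=
  PresentedGroup.of (Sum.inr m)

/-- For `g ∈ H` and `i ∈ ℤ`, the element `g_i := x⁻ⁱ g xⁱ`. -/
def cj (k n : ℕ) (u' : FreeGroup (Fin n)) (i : ℤ) (g : Hgp k n u') : Hgp k n u' :=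
  xg k n u' ^ (-i) * g * xg k n u' ^ i

/-- The element `b_i = x⁻ⁱ b xⁱ`. -/
def bi (k n : ℕ) (u' : FreeGroup (Fin n)) (i : ℤ) : Hgp k n u' := cj k n u' i (bg k n u')

/-- The element `y_{m,i} = x⁻ⁱ yₘ xⁱ`. -/
def yi (k n : ℕ) (u' : FreeGroup (Fin n)) (m : Fin n) (i : ℤ) : Hgp k n u' :=
  cj k n u' i (yg k n u' m)

/-- The element `u_i = x⁻ⁱ u xⁱ`, where `u` is the image of `u'` in `H`. -/
def ui (k n : ℕ) (u' : FreeGroup (Fin n)) (i : ℤ) : Hgp k n u' :=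
  cj k n u' i (FreeGroup.lift (yg k n u') u')

/-- The subgroup `G_{i,∞} = ⟨G_l : l ≥ i⟩` of `H`, generated by all `b_j`, `y_{m,j}` with
`j ≥ i`. -/
def Gge (k n : ℕ) (u' : FreeGroup (Fin n)) (i : ℤ) : Subgroup (Hgp k n u') :=
  Subgroup.closure
    ({g | ∃ j, i ≤ j ∧ g = bi k n u' j} ∪ {g | ∃ m j, i ≤ j ∧ g = yi k n u' m j})

/-- The subgroup `G_{−∞,i} = ⟨G_l : l ≤ i⟩` of `H`, generated by all `b_j`, `y_{m,j}` with
`j ≤ i`. -/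
def Gle (k n : ℕ) (u' : FreeGroup (Fin n)) (i : ℤ) : Subgroup (Hgp k n u') :=
  Subgroup.closure
    ({g | ∃ j, j ≤ i ∧ g = bi k n u' j} ∪ {g | ∃ m j, j ≤ i ∧ g = yi k n u' m j})

/-- `a` is the α-limit of `r`: the largest index `i` with `r ∈ G_{i,∞}`. -/
def IsAlphaLimit (k n : ℕ) (u' : FreeGroup (Fin n)) (r : Hgp k n u') (a : ℤ) : Prop :=
  r ∈ Gge k n u' a ∧ ∀ i, r ∈ Gge k n u' i → i ≤ a

/-- `w` is the ω-limit of `r`: the smallest index `i` with `r ∈ G_{−∞,i}`. -/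
def IsOmegaLimit (k n : ℕ) (u' : FreeGroup (Fin n)) (r : Hgp k n u') (w : ℤ) : Prop :=
  r ∈ Gle k n u' w ∧ ∀ i, r ∈ Gle k n u' i → w ≤ i

/-- The property that `φ : H →* Multiplicative ℤ` is the exponent-sum-in-`x` homomorphism. -/
def IsExpSum (k n : ℕ) (u' : FreeGroup (Fin n))
    (φ : Hgp k n u' →* Multiplicative ℤ) : Prop :=
  φ (xg k n u') = Multiplicative.ofAdd 1 ∧ φ (bg k n u') = 1 ∧ ∀ m, φ (yg k n u' m) = 1

/-- The normal closure, in the subgroup `N ≤ H`, of a subset `S ⊆ N`, viewed as a subgroup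
of `H`: the subgroup generated by all `N`-conjugates of elements of `S`. -/
def nclIn (k n : ℕ) (u' : FreeGroup (Fin n)) (N : Subgroup (Hgp k n u'))
    (S : Set (Hgp k n u')) : Subgroup (Hgp k n u') :=
  Subgroup.closure {h | ∃ g ∈ N, ∃ t ∈ S, h = g * t * g⁻¹}

/-- A reduced word is *cyclically reduced* if its first letter is not the inverse of its
last letter. -/
def IsCyclicallyReducedWord {X : Type*} (w : List (X × Bool)) : Prop :=
  ∀ a b : X × Bool, w.head? = some a → w.getLast? = some b → ¬(a.1 = b.1 ∧ a.2 = !b.2)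



namespace SuitCnj
open FreeGroup List

set_option linter.unusedSectionVars false

variable {α : Type*} [DecidableEq α]

/-- non-cancelling pair of letters -/
def Ok (p q : α × Bool) : Prop := ¬(p.1 = q.1 ∧ p.2 = !q.2)

lemma ok_symm {p q : α × Bool} (h : Ok p q) : Ok q p := by
  rintro ⟨h1, h2⟩; exact h ⟨h1.symm, by cases hp : p.2 <;> cases hq : q.2 <;> simp_all⟩

/-- a list is reduced iff adjacent letters don't cancel -/
def Reduced (L : List (α × Bool)) : Prop := L.Chain' Ok

lemma reduce_eq_self_of_reduced : ∀ {L : List (α × Bool)}, Reduced L → reduce L = L := by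
  intro L
  induction L with
  | nil => intro _; rfl
  | cons x L ih =>
    intro h
    have hL : Reduced L := (List.isChain_cons.1 h).2
    rw [reduce.cons, ih hL]
    cases L with
    | nil => rfl
    | cons hd tl =>
      have hok : Ok x hd := (List.isChain_cons_cons.1 h).1
      simp only [Ok] at hok
      simp [if_neg hok]

lemma reduced_of_reduce_eq_self : ∀ {L : List (α × Bool)}, reduce L = L → Reduced L := by
  intro L
  induction L with
  | nil => intro _; exact List.IsChain.nil
  | cons x L ih =>
    intro h
    have hlen : (reduce L).length ≤ L.length := Red.length_le reduce.red
    rw [reduce.cons] at h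
    rcases hred : reduce L with - | ⟨hd, tl⟩
    · rw [hred] at h
      change [x] = x :: L at h
      have : L = [] := by simpa using congrArg List.tail h
      subst this; exact List.isChain_singleton x
    · rw [hred] at h hlen
      change (if x.1 = hd.1 ∧ x.2 = !hd.2 then tl else x :: hd :: tl) = x :: L at h
      by_cases hc : x.1 = hd.1 ∧ x.2 = !hd.2
      · rw [if_pos hc] at h
        have h2 := congrArg List.length h
        simp at h2 hlen; omega
      · rw [if_neg hc] at h
        have hLe : L = hd :: tl := by
          have := congrArg List.tail h; simp at this; exact this.symm
        have hRL : Reduced L := ih (by rw [hred, hLe])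
        refine List.isChain_cons.2 ⟨?_, hRL⟩
        intro q hq
        rw [hLe] at hq
        simp at hq; subst hq; exact hc

lemma reduced_toWord (x : FreeGroup α) : Reduced (toWord x) :=
  reduced_of_reduce_eq_self (reduce_toWord x)

lemma toWord_mk_of_reduced {L : List (α × Bool)} (h : Reduced L) : (mk L).toWord = L := by
  rw [toWord_mk, reduce_eq_self_of_reduced h]

/-- concatenation with non-cancelling junction -/
lemma toWord_mul_of_ok {x y : FreeGroup α}
    (h : ∀ p ∈ (toWord x).getLast?, ∀ q ∈ (toWord y).head?, Ok p q) :
    (x * y).toWord = toWord x ++ toWord y := by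
  conv_lhs => rw [← mk_toWord (x := x), ← mk_toWord (x := y)]
  rw [mul_mk]
  exact toWord_mk_of_reduced (List.isChain_append.2 ⟨reduced_toWord x, reduced_toWord y, h⟩)

def letterElt (p : α × Bool) : FreeGroup α := mk [p]

lemma letterElt_toWord (p : α × Bool) : (letterElt p).toWord = [p] :=
  toWord_mk_of_reduced (List.isChain_singleton _)

lemma letterElt_inv (c : α) (s : Bool) : letterElt (c, !s) = (letterElt (c, s))⁻¹ := by
  rw [letterElt, letterElt, inv_mk]; rfl

lemma letterElt_mul_cancel (c : α) (s : Bool) : letterElt (c, s) * letterElt (c, !s) = 1 := by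
  rw [letterElt_inv]; group

lemma mk_cons (p : α × Bool) (L : List (α × Bool)) :
    mk (p :: L) = letterElt p * mk L := by
  rw [letterElt, mul_mk]; rfl

/-- head of a product with a single letter, non-cancelling case -/
lemma toWord_letter_mul {p : α × Bool} {x : FreeGroup α}
    (h : (toWord x).head? ≠ some (p.1, !p.2)) :
    (letterElt p * x).toWord = p :: toWord x := by
  conv_lhs => rw [← mk_toWord (x := x)]
  rw [letterElt, mul_mk, List.singleton_append]
  rw [toWord_mk]
  rw [reduce.cons, reduce_toWord]
  rcases hw : toWord x with - | ⟨hd, tl⟩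
  · rfl
  · change (if p.1 = hd.1 ∧ p.2 = !hd.2 then tl else p :: hd :: tl) = p :: hd :: tl
    by_cases hc : p.1 = hd.1 ∧ p.2 = !hd.2
    · exfalso; apply h; rw [hw]
      have : hd = (p.1, !p.2) := by
        obtain ⟨h1, h2⟩ := hc
        cases hdd : hd with
        | mk c s => simp_all
      rw [this]; rfl
    · rw [if_neg hc]

lemma getLast?_append_right {l1 l2 : List (α × Bool)} (h : l2 ≠ []) :
    (l1 ++ l2).getLast? = l2.getLast? := by
  rcases hl : l2.getLast? with - | w
  · exact absurd (List.getLast?_eq_none_iff.1 hl) h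
  · rw [List.getLast?_append, hl]; rfl

lemma getLast?_cons_ne_nil {l : List (α × Bool)} {a : α × Bool} (h : l ≠ []) :
    (a :: l).getLast? = l.getLast? := by
  rcases l with - | ⟨b, bs⟩
  · exact absurd rfl h
  · exact List.getLast?_cons_cons

/-- head letter of an element -/
def HeadIs (x : FreeGroup α) (p : α × Bool) : Prop := (toWord x).head? = some p

/-- last letter of an element -/
def LastIs (x : FreeGroup α) (p : α × Bool) : Prop := (toWord x).getLast? = some p

lemma invRev_head? (L : List (α × Bool)) :
    (invRev L).head? = L.getLast?.map (fun p => (p.1, !p.2)) := by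
  simp [invRev]

lemma invRev_getLast? (L : List (α × Bool)) :
    (invRev L).getLast? = L.head?.map (fun p => (p.1, !p.2)) := by
  simp [invRev]

lemma headIs_inv_iff (x : FreeGroup α) (c : α) (s : Bool) :
    HeadIs x⁻¹ (c, s) ↔ LastIs x (c, !s) := by
  rw [HeadIs, LastIs, toWord_inv, invRev_head?]
  rcases h : (toWord x).getLast? with - | p
  · simp
  · obtain ⟨c', s'⟩ := p
    simp only [Option.map_some, Option.some_inj, Prod.mk.injEq]
    constructor
    · rintro ⟨rfl, h2⟩
      refine ⟨rfl, ?_⟩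
      cases s' <;> simp_all
    · rintro ⟨rfl, rfl⟩
      simp

lemma cycred_invRev {L : List (α × Bool)} (h : IsCyclicallyReducedWord L) :
    IsCyclicallyReducedWord (invRev L) := by
  intro a b ha hb hab
  rw [invRev_head?] at ha
  rw [invRev_getLast?] at hb
  rcases hL : L.getLast? with - | p
  · rw [hL] at ha; simp at ha
  rcases hH : L.head? with - | q
  · rw [hH] at hb; simp at hb
  rw [hL] at ha; rw [hH] at hb
  simp only [Option.map_some, Option.some_inj] at ha hb
  refine h q p hH hL ⟨?_, ?_⟩
  · have := hab.1; rw [← ha, ← hb] at this; exact this.symm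
  · have h2 := hab.2
    rw [← ha, ← hb] at h2
    simp only at h2
    cases hq : q.2 <;> cases hp : p.2 <;> simp_all

/-- every element has a conjugate whose word is cyclically reduced -/
lemma exists_cycred_conj (x : FreeGroup α) :
    ∃ c z, z = c⁻¹ * x * c ∧ IsCyclicallyReducedWord (toWord z) := by
  generalize hN : (toWord x).length = N
  induction N using Nat.strong_induction_on generalizing x with
  | _ N ih =>
    by_cases hcyc : IsCyclicallyReducedWord (toWord x)
    · exact ⟨1, x, by group, hcyc⟩
    · simp only [IsCyclicallyReducedWord, not_forall] at hcyc
      obtain ⟨a, b, ha, hb, hab⟩ := hcyc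
      simp only [not_not] at hab
      obtain ⟨cA, s0⟩ := a
      obtain ⟨cB, s1⟩ := b
      obtain ⟨rfl, rfl⟩ : cA = cB ∧ s0 = !s1 := hab
      rcases hL : toWord x with - | ⟨hd, tl⟩
      · rw [hL] at ha; exact absurd ha (by simp)
      rw [hL] at ha hb
      have hhd : hd = (cA, !s1) := by simpa using ha
      subst hhd
      rcases htl : tl with - | ⟨t0, ts⟩
      · subst htl
        simp at hb
      subst htl
      rw [List.getLast?_cons_cons] at hb
      have hmem : (cA, s1) ∈ (t0 :: ts).getLast? := hb
      obtain ⟨mid, hmid⟩ : ∃ mid, t0 :: ts = mid ++ [(cA, s1)] :=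
        ⟨(t0 :: ts).dropLast, (List.dropLast_append_getLast? _ hmem).symm⟩
      have hinv : (mk [(cA, s1)] : FreeGroup α) = (letterElt (cA, !s1))⁻¹ := by
        have := letterElt_inv cA (!s1)
        simp only [Bool.not_not] at this
        exact this
      have hxeq : x = letterElt (cA, !s1) * mk mid * (letterElt (cA, !s1))⁻¹ := by
        conv_lhs => rw [← mk_toWord (x := x), hL, hmid]
        rw [mk_cons, ← mul_mk, hinv, mul_assoc]
      have hred : Reduced ((cA, !s1) :: (mid ++ [(cA, s1)])) := by
        rw [← hmid, ← hL]; exact reduced_toWord x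
      have hmidred : Reduced mid := by
        have h1 : Reduced (mid ++ [(cA, s1)]) := (List.isChain_cons.1 hred).2
        exact (List.isChain_append.1 h1).1
      have hlen : (toWord (mk mid)).length < N := by
        rw [toWord_mk_of_reduced hmidred]
        have hLl := congrArg List.length hL
        rw [hN, hmid] at hLl
        simp at hLl
        omega
      obtain ⟨c, z, hz, hzc⟩ := ih _ hlen (mk mid) rfl
      refine ⟨letterElt (cA, !s1) * c, z, ?_, hzc⟩
      rw [hz, hxeq]
      group

/-- rotation of a cyclically reduced word at a chosen position -/
lemma rotate_cycred {P Q : List (α × Bool)} {ℓ : α × Bool}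
    (hred : Reduced (P ++ ℓ :: Q)) (hcyc : IsCyclicallyReducedWord (P ++ ℓ :: Q)) :
    Reduced (ℓ :: (Q ++ P)) ∧ IsCyclicallyReducedWord (ℓ :: (Q ++ P)) ∧
      mk (ℓ :: (Q ++ P)) = (mk P)⁻¹ * mk (P ++ ℓ :: Q) * mk P := by
  have hredP : Reduced P := (List.isChain_append.1 hred).1
  have hredQ' : Reduced (ℓ :: Q) := (List.isChain_append.1 hred).2.1
  have hredQ : Reduced Q := (List.isChain_cons.1 hredQ').2
  have hjPl : ∀ p ∈ P.getLast?, Ok p ℓ := by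
    intro p hp
    exact (List.isChain_append.1 hred).2.2 p hp ℓ (by simp)
  have hlast : (P ++ ℓ :: Q).getLast? = if Q = [] then some ℓ else Q.getLast? := by
    rcases hQ : Q with - | ⟨q, qs⟩
    · rw [if_pos rfl, getLast?_append_right (by simp)]; rfl
    · rw [if_neg (by simp), getLast?_append_right (by simp), getLast?_cons_ne_nil (by simp)]
  have hhead : (P ++ ℓ :: Q).head? = if P = [] then some ℓ else P.head? := by
    rcases hP : P with - | ⟨p, ps⟩ <;> simp
  -- the new word is reduced
  have hnew : Reduced (ℓ :: (Q ++ P)) := by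
    refine List.isChain_cons.2 ⟨?_, ?_⟩
    · intro q hq
      rcases hQ : Q with - | ⟨q0, qs⟩
      · subst hQ
        simp only [List.nil_append] at hq
        rcases hP : P with - | ⟨p0, ps⟩
        · subst hP; simp at hq
        · subst hP
          have hq' : p0 = q := by simpa using hq
          rw [← hq']
          refine ok_symm (hcyc p0 ℓ ?_ ?_)
          · rw [hhead]; simp
          · rw [hlast]; simp
      · subst hQ
        simp only [List.cons_append, List.head?_cons, Option.mem_def, Option.some_inj] at hq
        subst hq
        exact (List.isChain_cons_cons.1 hredQ').1
    · refine List.isChain_append.2 ⟨hredQ, hredP, ?_⟩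
      intro q hq p hp
      rcases hQ : Q with - | ⟨q0, qs⟩
      · subst hQ; simp at hq
      · subst hQ
        rcases hP : P with - | ⟨p0, ps⟩
        · subst hP; simp at hp
        · subst hP
          refine ok_symm (hcyc p q ?_ ?_)
          · rw [hhead, if_neg (by simp)]
            exact hp
          · rw [hlast, if_neg (by simp)]
            exact hq
  refine ⟨hnew, ?_, ?_⟩
  · -- cyclically reduced
    intro a b ha hb
    obtain rfl : ℓ = a := by simpa using ha
    rcases hP : P with - | ⟨p0, ps⟩
    · subst hP
      simp only [List.append_nil] at hb
      rcases hQ : Q with - | ⟨q0, qs⟩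
      · subst hQ
        simp only [List.getLast?_singleton, Option.some_inj] at hb
        subst hb
        rintro ⟨h1, h2⟩
        simp at h2
      · subst hQ
        refine hcyc ℓ b ?_ ?_
        · rw [hhead]; simp
        · rw [hlast, if_neg (by simp)]
          rw [getLast?_cons_ne_nil (by simp)] at hb
          exact hb
    · subst hP
      have hbval : b ∈ (p0 :: ps).getLast? := by
        rw [getLast?_cons_ne_nil (by simp), getLast?_append_right (by simp)] at hb
        exact hb
      exact ok_symm (hjPl b hbval)
  · -- group identity
    have h1 : mk (P ++ ℓ :: Q) = mk P * mk (ℓ :: Q) := mul_mk.symm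
    have h2 : mk (ℓ :: (Q ++ P)) = mk (ℓ :: Q) * mk P := by
      rw [mul_mk]; rfl
    rw [h1, h2]
    group

lemma letterElt_true (c : α) : letterElt (c, true) = of c := rfl

lemma letterElt_false (c : α) : letterElt (c, false) = (of c)⁻¹ := by
  have := letterElt_inv c true
  simpa [letterElt_true] using this

section Subst

variable {A B : Type*} [DecidableEq A] [DecidableEq B]

/-- the inclusion of the free group on the `y`-letters -/
def yin : FreeGroup B →* FreeGroup (A ⊕ B) := FreeGroup.map Sum.inr

lemma reduce_map {β γ : Type*} [DecidableEq β] [DecidableEq γ] {φ : β → γ}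
    (hφ : Function.Injective φ) (L : List (β × Bool)) :
    reduce (L.map (fun p => (φ p.1, p.2))) = (reduce L).map (fun p => (φ p.1, p.2)) := by
  induction L with
  | nil => rfl
  | cons x L ih =>
    rw [List.map_cons, reduce.cons, reduce.cons, ih]
    rcases h : reduce L with - | ⟨hd, tl⟩
    · rfl
    · simp only [List.map_cons]
      by_cases hc : x.1 = hd.1 ∧ x.2 = !hd.2
      · rw [if_pos hc, if_pos ⟨congrArg φ hc.1, hc.2⟩]
      · rw [if_neg hc, if_neg (by
          rintro ⟨h1, h2⟩
          exact hc ⟨hφ h1, h2⟩)]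
        simp

lemma toWord_yin (w : FreeGroup B) :
    (toWord (yin w : FreeGroup (A ⊕ B))) = (toWord w).map (fun p => (Sum.inr p.1, p.2)) := by
  conv_lhs => rw [← mk_toWord (x := w)]
  rw [yin, map.mk, toWord_mk, reduce_map Sum.inr_injective, reduce_toWord]

lemma yin_eq_one_iff (w : FreeGroup B) : (yin w : FreeGroup (A ⊕ B)) = 1 ↔ w = 1 := by
  constructor
  · intro h
    have := congrArg toWord h
    rw [toWord_yin, toWord_one, List.map_eq_nil_iff] at this
    exact toWord_eq_nil_iff.1 this
  · rintro rfl; exact _root_.map_one _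

lemma exists_yin_of_allY {L : List ((A ⊕ B) × Bool)} (h : ∀ p ∈ L, ∃ b, p.1 = Sum.inr b) :
    ∃ w : FreeGroup B, yin w = mk L := by
  induction L with
  | nil => exact ⟨1, by rw [_root_.map_one, one_eq_mk]⟩
  | cons p L ih =>
    obtain ⟨w', hw'⟩ := ih (fun q hq => h q (List.mem_cons_of_mem _ hq))
    obtain ⟨b, hb⟩ := h p (List.mem_cons_self)
    refine ⟨mk [(b, p.2)] * w', ?_⟩
    rw [_root_.map_mul, hw', yin, map.mk, mk_cons]
    congr 1
    rw [letterElt]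
    congr 1
    simp only [List.map_cons, List.map_nil]
    rw [← hb]

/-- multiplying a `y`-word with something starting with an `x`-letter: no cancellation -/
lemma toWord_yin_mul {ω : FreeGroup B} {y : FreeGroup (A ⊕ B)} {c : A} {s : Bool}
    (hy : HeadIs y (Sum.inl c, s)) :
    toWord (yin ω * y) = toWord (yin ω : FreeGroup (A ⊕ B)) ++ toWord y := by
  apply toWord_mul_of_ok
  intro p hp q hq
  rw [HeadIs] at hy
  rw [hy] at hq
  simp only [Option.mem_def, Option.some_inj] at hq
  subst hq
  rw [toWord_yin] at hp
  simp only [List.getLast?_map, Option.mem_def, Option.map_eq_some_iff] at hp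
  obtain ⟨r, hr1, hr2⟩ := hp
  rw [← hr2]
  rintro ⟨h1, h2⟩
  simp at h1

/-- possible head letters of `yin ω * y` when `y` starts with an x-letter -/
lemma headIs_yin_mul {ω : FreeGroup B} {y : FreeGroup (A ⊕ B)} {c : A} {s : Bool}
    (hy : HeadIs y (Sum.inl c, s)) {p : (A ⊕ B) × Bool} (h : HeadIs (yin ω * y) p) :
    (p = (Sum.inl c, s) ∧ ω = 1) ∨ (∃ b s', p = (Sum.inr b, s')) := by
  rw [HeadIs, toWord_yin_mul hy, List.head?_append] at h
  rcases hω : toWord (yin ω : FreeGroup (A ⊕ B)) with - | ⟨q, qs⟩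
  · left
    rw [hω] at h
    simp only [List.head?_nil, Option.none_or] at h
    rw [HeadIs] at hy
    rw [hy] at h
    refine ⟨by simpa using h.symm, ?_⟩
    rw [← toWord_eq_nil_iff (x := ω)]
    rw [toWord_yin] at hω
    exact List.map_eq_nil_iff.1 hω
  · right
    rw [hω] at h
    rw [show ((q :: qs).head?).or y.toWord.head? = some q from rfl] at h
    simp only [Option.some_inj] at h
    subst h
    have : q ∈ toWord (yin ω : FreeGroup (A ⊕ B)) := by rw [hω]; simp
    rw [toWord_yin] at this
    simp only [List.mem_map] at this
    obtain ⟨r, -, hr⟩ := this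
    exact ⟨r.1, r.2, by rw [← hr]⟩

variable (f : A → A) (V : A → FreeGroup B)

/-- the substitution on generators -/
def subFun : A ⊕ B → FreeGroup (A ⊕ B)
  | .inl a => FreeGroup.of (.inl (f a)) * yin (V a)
  | .inr b => FreeGroup.of (.inr b)

/-- the substitution homomorphism -/
def TT : FreeGroup (A ⊕ B) →* FreeGroup (A ⊕ B) := FreeGroup.lift (subFun f V)

lemma TT_of_inl (a : A) : TT f V (of (.inl a)) = of (.inl (f a)) * yin (V a) :=
  FreeGroup.lift_apply_of

lemma TT_of_inr (b : B) : TT f V (of (.inr b)) = of (.inr b) :=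
  FreeGroup.lift_apply_of

lemma TT_yin (w : FreeGroup B) : TT f V (yin w) = yin w := by
  have : (TT f V).comp (yin : FreeGroup B →* FreeGroup (A ⊕ B)) = yin := by
    apply FreeGroup.ext_hom
    intro b
    simp only [MonoidHom.comp_apply]
    rw [show (yin (FreeGroup.of b) : FreeGroup (A ⊕ B)) = of (.inr b) from rfl]
    exact TT_of_inr f V b
  exact DFunLike.congr_fun this w

lemma not_headIs_yin_inl (ω : FreeGroup B) (c : A) (s : Bool) :
    ¬ HeadIs (yin ω : FreeGroup (A ⊕ B)) (Sum.inl c, s) := by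
  intro h
  rw [HeadIs, toWord_yin] at h
  simp only [List.head?_map, Option.map_eq_some_iff] at h
  obtain ⟨q, -, hq⟩ := h
  simpa using congrArg (fun r => r.1) hq

lemma splitY (L : List ((A ⊕ B) × Bool)) :
    (∀ p ∈ L, ∃ b, p.1 = Sum.inr b) ∨
      ∃ (L1 : List ((A ⊕ B) × Bool)) (c : A) (s : Bool) (L2 : List ((A ⊕ B) × Bool)),
        L = L1 ++ (Sum.inl c, s) :: L2 ∧ (∀ p ∈ L1, ∃ b, p.1 = Sum.inr b) := by
  induction L with
  | nil => left; simp
  | cons p L ih =>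
    rcases hp : p.1 with c | b
    · right
      refine ⟨[], c, p.2, L, ?_, by simp⟩
      rw [List.nil_append]
      congr 1
      rw [← hp]
    · rcases ih with h | ⟨L1, c, s, L2, h1, h2⟩
      · left
        intro q hq
        rcases List.mem_cons.1 hq with rfl | hq'
        · exact ⟨b, hp⟩
        · exact h q hq'
      · right
        refine ⟨p :: L1, c, s, L2, by rw [h1]; simp, ?_⟩
        intro q hq
        rcases List.mem_cons.1 hq with rfl | hq'
        · exact ⟨b, hp⟩
        · exact h2 q hq'

theorem psi_and_K (hf : Function.Injective f) :
    ∀ (NN : ℕ) (z : FreeGroup (A ⊕ B)), (toWord z).length ≤ NN →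
      (∀ d : A, HeadIs (TT f V z) (Sum.inl d, true) →
          ∃ a, f a = d ∧ HeadIs z (Sum.inl a, true)) ∧
      (∀ e : A, ¬ HeadIs z (Sum.inl e, false) →
          ¬ HeadIs (yin (V e) * TT f V z) (Sum.inl (f e), false)) := by
  intro NN
  induction NN with
  | zero =>
    intro z hz
    have hz1 : z = 1 :=
      toWord_eq_nil_iff.1 (List.length_eq_zero_iff.1 (le_antisymm hz (Nat.zero_le _)))
    subst hz1
    constructor
    · intro d hd
      rw [_root_.map_one] at hd
      rw [HeadIs, toWord_one] at hd
      simp at hd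
    · intro e he
      rw [_root_.map_one, mul_one]
      exact not_headIs_yin_inl (V e) (f e) false
  | succ NN ih =>
    intro z hz
    rcases splitY (toWord z) with hY | ⟨L1, c, s, L2, hL, hY1⟩
    · -- z is a pure y-word
      obtain ⟨w, hw⟩ := exists_yin_of_allY hY
      rw [mk_toWord] at hw
      constructor
      · intro d hd
        rw [← hw, TT_yin] at hd
        exact absurd hd (not_headIs_yin_inl _ _ _)
      · intro e he
        rw [← hw, TT_yin, ← _root_.map_mul]
        exact not_headIs_yin_inl _ _ _
    · -- z = (y-word) * (inl c, s) * z4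
      have hred' : Reduced (L1 ++ (Sum.inl c, s) :: L2) := hL ▸ reduced_toWord z
      have hred1 : Reduced L1 := (List.isChain_append.1 hred').1
      have hredR : Reduced ((Sum.inl c, s) :: L2) := (List.isChain_append.1 hred').2.1
      have hred2 : Reduced L2 := (List.isChain_cons.1 hredR).2
      have hnc : ∀ q ∈ L2.head?, Ok (Sum.inl c, s) q := (List.isChain_cons.1 hredR).1
      obtain ⟨w, hw⟩ : ∃ w, yin w = mk L1 := exists_yin_of_allY hY1
      have hz4 : toWord (mk L2 : FreeGroup (A ⊕ B)) = L2 := toWord_mk_of_reduced hred2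
      have hlen4 : (toWord (mk L2 : FreeGroup (A ⊕ B))).length ≤ NN := by
        rw [hz4]
        have := congrArg List.length hL
        simp at this
        omega
      have hne4 : L2.head? ≠ some (Sum.inl c, !s) := by
        intro hcon
        exact hnc _ hcon ⟨rfl, by simp⟩
      have hzdecomp : z = yin w * (letterElt (Sum.inl c, s) * mk L2) := by
        conv_lhs => rw [← mk_toWord (x := z), hL]
        rw [hw, ← mk_cons, mul_mk]
      have hL1nil : w = 1 → (toWord z).head? = some (Sum.inl c, s) := by
        intro hw1
        have hmk1 : (mk L1 : FreeGroup (A ⊕ B)) = 1 := by rw [← hw, hw1, _root_.map_one]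
        have := congrArg toWord hmk1
        rw [toWord_mk_of_reduced hred1, toWord_one] at this
        rw [hL, this]
        rfl
      cases s
      · -- s = false
        have hPsi4 : ¬ HeadIs (TT f V (mk L2)) (Sum.inl (f c), true) := by
          intro hcon
          obtain ⟨a, ha1, ha2⟩ := (ih (mk L2) hlen4).1 (f c) hcon
          have haa : a = c := hf ha1
          subst haa
          rw [HeadIs, hz4] at ha2
          exact hne4 (by rw [ha2]; norm_num)
        have hR : toWord ((of (Sum.inl (f c)))⁻¹ * TT f V (mk L2)) =
            (Sum.inl (f c), false) :: toWord (TT f V (mk L2)) := by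
          rw [← letterElt_false, toWord_letter_mul (by simpa [HeadIs] using hPsi4)]
        have hRhead : HeadIs ((of (Sum.inl (f c)))⁻¹ * TT f V (mk L2)) (Sum.inl (f c), false) := by
          rw [HeadIs, hR]; rfl
        have hTz : TT f V z =
            yin (w * (V c)⁻¹) * ((of (Sum.inl (f c)))⁻¹ * TT f V (mk L2)) := by
          rw [hzdecomp, _root_.map_mul, _root_.map_mul, TT_yin, letterElt_false, _root_.map_inv,
            TT_of_inl, mul_inv_rev, _root_.map_mul (yin (A := A)) w (V c)⁻¹, _root_.map_inv]
          group
        constructor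
        · intro d hd
          rw [hTz] at hd
          rcases headIs_yin_mul hRhead hd with ⟨hp, -⟩ | ⟨b, s', hp⟩ <;> simp at hp
        · intro e he hcon
          rw [hTz, ← mul_assoc, ← _root_.map_mul] at hcon
          rcases headIs_yin_mul hRhead hcon with ⟨hp, hQ1⟩ | ⟨b, s', hp⟩
          · have hec : f e = f c := by simpa using congrArg (fun r => r.1) hp
            have hee : e = c := hf hec
            subst hee
            have hw1 : w = 1 := by
              have h1 : V e * (w * (V e)⁻¹) = 1 := hQ1
              calc w = (V e)⁻¹ * (V e * (w * (V e)⁻¹)) * V e := by group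
                _ = 1 := by rw [h1]; group
            exact he (hL1nil hw1)
          · simp at hp
      · -- s = true
        have hKc := (ih (mk L2) hlen4).2 c (by
          rw [HeadIs, hz4]
          simpa using hne4)
        have hR : toWord (of (Sum.inl (f c)) * (yin (V c) * TT f V (mk L2))) =
            (Sum.inl (f c), true) :: toWord (yin (V c) * TT f V (mk L2)) := by
          rw [← letterElt_true, toWord_letter_mul (by simpa [HeadIs] using hKc)]
        have hRhead : HeadIs (of (Sum.inl (f c)) * (yin (V c) * TT f V (mk L2)))
            (Sum.inl (f c), true) := by
          rw [HeadIs, hR]; rfl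
        have hTz : TT f V z =
            yin w * (of (Sum.inl (f c)) * (yin (V c) * TT f V (mk L2))) := by
          rw [hzdecomp, _root_.map_mul, _root_.map_mul, TT_yin, letterElt_true, TT_of_inl]
          group
        constructor
        · intro d hd
          rw [hTz] at hd
          rcases headIs_yin_mul hRhead hd with ⟨hp, hw1⟩ | ⟨b, s', hp⟩
          · have hdc : d = f c := by simpa using congrArg (fun r => r.1) hp
            subst hdc
            exact ⟨c, rfl, hL1nil hw1⟩
          · simp at hp
        · intro e he hcon
          rw [hTz, ← mul_assoc, ← _root_.map_mul] at hcon
          rcases headIs_yin_mul hRhead hcon with ⟨hp, -⟩ | ⟨b, s', hp⟩ <;> simp at hp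

theorem headIs_TT (hf : Function.Injective f) {z : FreeGroup (A ⊕ B)} {a : A}
    (h : HeadIs z (Sum.inl a, true)) : HeadIs (TT f V z) (Sum.inl (f a), true) := by
  rcases hzw : toWord z with - | ⟨hd, M⟩
  · rw [HeadIs, hzw] at h; simp at h
  have hhd : hd = (Sum.inl a, true) := by
    rw [HeadIs, hzw] at h; simpa using h
  subst hhd
  have hred' : Reduced ((Sum.inl a, true) :: M) := hzw ▸ reduced_toWord z
  have hredM : Reduced M := (List.isChain_cons.1 hred').2
  have hnc : ∀ q ∈ M.head?, Ok (Sum.inl a, true) q := (List.isChain_cons.1 hred').1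
  have hMhead : ¬ HeadIs (mk M : FreeGroup (A ⊕ B)) (Sum.inl a, false) := by
    intro hcon
    rw [HeadIs, toWord_mk_of_reduced hredM] at hcon
    exact hnc _ hcon ⟨rfl, by simp⟩
  have hK := (psi_and_K f V hf (toWord (mk M : FreeGroup (A ⊕ B))).length (mk M) le_rfl).2
    a hMhead
  have hzdec : z = of (Sum.inl a) * mk M := by
    conv_lhs => rw [← mk_toWord (x := z), hzw]
    rw [mk_cons, letterElt_true]
  have hTz : TT f V z = of (Sum.inl (f a)) * (yin (V a) * TT f V (mk M)) := by
    rw [hzdec, _root_.map_mul, TT_of_inl]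
    group
  rw [hTz, HeadIs, ← letterElt_true, toWord_letter_mul (by simpa [HeadIs] using hK)]
  rfl

theorem cycred_TT (hf : Function.Injective f) (f' : A → A) (V' : A → FreeGroup B)
    (hf' : Function.Injective f')
    (hinv : ∀ z : FreeGroup (A ⊕ B), TT f' V' (TT f V z) = z) (hffa : ∀ a, f' (f a) = a)
    {z : FreeGroup (A ⊕ B)} {a : A}
    (hhead : HeadIs z (Sum.inl a, true)) (hcyc : IsCyclicallyReducedWord (toWord z)) :
    HeadIs (TT f V z) (Sum.inl (f a), true) ∧
      IsCyclicallyReducedWord (toWord (TT f V z)) := by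
  have h1 := headIs_TT f V hf hhead
  refine ⟨h1, ?_⟩
  intro p q hp hq hbad
  have hpv : p = (Sum.inl (f a), true) := by
    rw [HeadIs] at h1
    rw [h1] at hp
    simpa using hp.symm
  subst hpv
  have hqv : q = (Sum.inl (f a), false) := by
    obtain ⟨h2, h3⟩ := hbad
    obtain ⟨q1, q2⟩ := q
    simp only at h2 h3
    simp only [← h2, Prod.mk.injEq, true_and]
    cases q2
    · rfl
    · simp at h3
  subst hqv
  have hinvhead : HeadIs (TT f V z)⁻¹ (Sum.inl (f a), true) := by
    rw [headIs_inv_iff]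
    simpa [LastIs] using hq
  have h2 := headIs_TT f' V' hf' hinvhead
  rw [← _root_.map_inv, hinv, hffa] at h2
  have hlastz : LastIs z (Sum.inl a, false) := by
    have := (headIs_inv_iff z (Sum.inl a) true).1 h2
    simpa using this
  exact hcyc _ _ hhead hlastz ⟨rfl, by simp⟩

end Subst

end SuitCnj


namespace SuitCnj2
open FreeGroup

lemma fin_sub_one_val {k : ℕ} [NeZero k] (t : Fin k) :
    ((t - 1 : Fin k) : ℕ) = if (t : ℕ) = 0 then k - 1 else (t : ℕ) - 1 := by
  have hk : 0 < k := Nat.pos_of_ne_zero (NeZero.ne k)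
  have hval : ((t - 1 : Fin k) : ℕ) = (k - ((1 : Fin k) : ℕ) + (t : ℕ)) % k := by
    rw [Fin.sub_def]
  rw [hval, Fin.val_one']
  by_cases hk1 : k = 1
  · subst hk1
    have ht : (t : ℕ) = 0 := by have := t.isLt; omega
    simp [ht]
  · have hk2 : 2 ≤ k := by omega
    have h1k : 1 % k = 1 := Nat.mod_eq_of_lt (by omega)
    rw [h1k]
    by_cases ht : (t : ℕ) = 0
    · rw [if_pos ht, ht, add_zero]
      exact Nat.mod_eq_of_lt (by omega)
    · rw [if_neg ht]
      have htlt := t.isLt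
      have heq : k - 1 + (t : ℕ) = k + ((t : ℕ) - 1) := by omega
      rw [heq, Nat.add_mod_left]
      exact Nat.mod_eq_of_lt (by omega)

lemma fin_add_one_val {k : ℕ} [NeZero k] (t : Fin k) :
    ((t + 1 : Fin k) : ℕ) = if (t : ℕ) = k - 1 then 0 else (t : ℕ) + 1 := by
  have hk : 0 < k := Nat.pos_of_ne_zero (NeZero.ne k)
  have hval : ((t + 1 : Fin k) : ℕ) = ((t : ℕ) + ((1 : Fin k) : ℕ)) % k := by
    rw [Fin.add_def]
  rw [hval, Fin.val_one']
  by_cases hk1 : k = 1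
  · subst hk1
    have ht : (t : ℕ) = 0 := by have := t.isLt; omega
    simp [ht]
  · have hk2 : 2 ≤ k := by omega
    have h1k : 1 % k = 1 := Nat.mod_eq_of_lt (by omega)
    rw [h1k]
    have htlt := t.isLt
    by_cases ht : (t : ℕ) = k - 1
    · rw [if_pos ht, ht]
      have : k - 1 + 1 = k := by omega
      rw [this, Nat.mod_self]
    · rw [if_neg ht]
      exact Nat.mod_eq_of_lt (by omega)

lemma reln (k n : ℕ) (u' : FreeGroup (Fin n)) (i : ℤ) :
    bi k n u' (i + k) = bi k n u' i * ui k n u' i := by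
  have h1 : PresentedGroup.mk (relOfH k n u')
      ((FreeGroup.of (Sum.inl true))⁻¹ ^ k * (FreeGroup.of (Sum.inl false))⁻¹ *
        (FreeGroup.of (Sum.inl true)) ^ k * FreeGroup.of (Sum.inl false) *
        FreeGroup.map Sum.inr u') = 1 := by
    apply (QuotientGroup.eq_one_iff _).2
    exact Subgroup.subset_normalClosure rfl
  have hU : PresentedGroup.mk (relOfH k n u') (FreeGroup.map Sum.inr u') =
      FreeGroup.lift (yg k n u') u' := by
    have hcomp : (PresentedGroup.mk (relOfH k n u')).comp (FreeGroup.map Sum.inr) =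
        FreeGroup.lift (yg k n u') := by
      apply FreeGroup.ext_hom
      intro m
      rw [MonoidHom.comp_apply, FreeGroup.lift_apply_of]
      rfl
    exact DFunLike.congr_fun hcomp u'
  simp only [_root_.map_mul, _root_.map_pow, _root_.map_inv, hU] at h1
  have hxg : PresentedGroup.mk (relOfH k n u') (FreeGroup.of (Sum.inl true)) = xg k n u' := rfl
  have hbg : PresentedGroup.mk (relOfH k n u') (FreeGroup.of (Sum.inl false)) = bg k n u' := rfl
  rw [hxg, hbg] at h1
  show cj k n u' (i + k) (bg k n u') =
    cj k n u' i (bg k n u') * cj k n u' i (FreeGroup.lift (yg k n u') u')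
  unfold cj
  calc xg k n u' ^ (-(i + (k:ℤ))) * bg k n u' * xg k n u' ^ (i + (k:ℤ))
      = (xg k n u' ^ (-i) * bg k n u' * xg k n u' ^ i) *
          (xg k n u' ^ (-i) * FreeGroup.lift (yg k n u') u' * xg k n u' ^ i) *
          (xg k n u' ^ (-i) *
            ((xg k n u')⁻¹ ^ k * (bg k n u')⁻¹ * xg k n u' ^ k * bg k n u' *
              FreeGroup.lift (yg k n u') u')⁻¹ * xg k n u' ^ i) := by
        group
    _ = _ := by rw [h1]; group

lemma phi_cj {k n : ℕ} {u' : FreeGroup (Fin n)} (φ : Hgp k n u' →* Multiplicative ℤ)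
    (i : ℤ) (g : Hgp k n u') : φ (cj k n u' i g) = φ g := by
  unfold cj
  rw [_root_.map_mul, _root_.map_mul, _root_.map_zpow, _root_.map_zpow]
  rw [mul_comm (φ (xg k n u') ^ (-i)) (φ g), mul_assoc, ← zpow_add]
  simp

lemma phi_lift_u {k n : ℕ} {u' : FreeGroup (Fin n)} {φ : Hgp k n u' →* Multiplicative ℤ}
    (hφ : IsExpSum k n u' φ) (v : FreeGroup (Fin n)) :
    φ (FreeGroup.lift (yg k n u') v) = 1 := by
  have hcomp : φ.comp (FreeGroup.lift (yg k n u')) = 1 := by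
    apply FreeGroup.ext_hom
    intro m
    rw [MonoidHom.comp_apply, FreeGroup.lift_apply_of, hφ.2.2 m]
    rfl
  have := DFunLike.congr_fun hcomp v
  simpa using this

lemma mem_ker_bi {k n : ℕ} {u' : FreeGroup (Fin n)} {φ : Hgp k n u' →* Multiplicative ℤ}
    (hφ : IsExpSum k n u' φ) (j : ℤ) : bi k n u' j ∈ φ.ker := by
  rw [MonoidHom.mem_ker, bi, phi_cj]
  exact hφ.2.1

lemma mem_ker_yi {k n : ℕ} {u' : FreeGroup (Fin n)} {φ : Hgp k n u' →* Multiplicative ℤ}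
    (hφ : IsExpSum k n u' φ) (m : Fin n) (j : ℤ) : yi k n u' m j ∈ φ.ker := by
  rw [MonoidHom.mem_ker, yi, phi_cj]
  exact hφ.2.2 m

lemma mem_ker_ui {k n : ℕ} {u' : FreeGroup (Fin n)} {φ : Hgp k n u' →* Multiplicative ℤ}
    (hφ : IsExpSum k n u' φ) (i : ℤ) : ui k n u' i ∈ φ.ker := by
  rw [MonoidHom.mem_ker, ui, phi_cj]
  exact phi_lift_u hφ u'


section Trans

open SuitCnj

variable {k n : ℕ} {u' : FreeGroup (Fin n)} {φ : Hgp k n u' →* Multiplicative ℤ}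
  [NeZero k]
  (basis : ∀ i : ℤ, FreeGroupBasis (Fin k ⊕ Fin n × ℤ) ↥φ.ker)
  (hb : ∀ i : ℤ, ∀ t : Fin k,
      ((basis i) (Sum.inl t) : Hgp k n u') = bi k n u' (i + (t : ℕ)))
  (hy : ∀ i : ℤ, ∀ m : Fin n, ∀ j : ℤ,
      ((basis i) (Sum.inr (m, j)) : Hgp k n u') = yi k n u' m j)

/-- the y-word `u_i` in the abstract free group -/
noncomputable abbrev VW (u' : FreeGroup (Fin n)) (i : ℤ) : FreeGroup (Fin n × ℤ) :=
  FreeGroup.map (fun m => (m, i)) u'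

include hy in
lemma hUval (j i : ℤ) :
    (((basis j).repr.symm (yin (A := Fin k) (VW u' i)) : ↥φ.ker)
      : Hgp k n u') = ui k n u' i := by
  have hcomp : ((φ.ker).subtype.comp ((basis j).repr.symm.toMonoidHom.comp
      ((yin (A := Fin k) (B := Fin n × ℤ)).comp
        (FreeGroup.map (fun m => (m, i))))))
      = (MulAut.conj ((xg k n u') ^ (-i))).toMonoidHom.comp
          (FreeGroup.lift (yg k n u')) := by
    apply FreeGroup.ext_hom
    intro m
    simp only [MonoidHom.comp_apply, MulEquiv.coe_toMonoidHom]
    rw [show FreeGroup.map (fun m => (m, i)) (FreeGroup.of m) = FreeGroup.of (m, i) from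
      FreeGroup.map.of]
    rw [show (yin (A := Fin k) (FreeGroup.of (m, i))) = FreeGroup.of
      (Sum.inr (m, i) : Fin k ⊕ Fin n × ℤ) from FreeGroup.map.of]
    rw [FreeGroup.lift_apply_of]
    have h1 : ((φ.ker).subtype) ((basis j).repr.symm
        (FreeGroup.of (Sum.inr (m, i) : Fin k ⊕ Fin n × ℤ))) =
        ((basis j) (Sum.inr (m, i)) : Hgp k n u') := rfl
    rw [h1, hy j m i, MulAut.conj_apply]
    show yi k n u' m i = xg k n u' ^ (-i) * yg k n u' m * (xg k n u' ^ (-i))⁻¹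
    rw [yi, cj, zpow_neg, inv_inv]
  have h2 := DFunLike.congr_fun hcomp u'
  simp only [MonoidHom.comp_apply, MulEquiv.coe_toMonoidHom, MulAut.conj_apply] at h2
  rw [ui, cj]
  calc ((((basis j).repr.symm (yin (A := Fin k) (VW u' i))) : ↥φ.ker) : Hgp k n u')
      = xg k n u' ^ (-i) * FreeGroup.lift (yg k n u') u' * (xg k n u' ^ (-i))⁻¹ := h2
    _ = xg k n u' ^ (-i) * FreeGroup.lift (yg k n u') u' * xg k n u' ^ i := by group

/-- the index map for going up -/
def fup (k : ℕ) [NeZero k] : Fin k → Fin k := fun t => t - 1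

/-- the index map for going down -/
def fdn (k : ℕ) [NeZero k] : Fin k → Fin k := fun t => t + 1

/-- substituted words going up -/
noncomputable def Vup (u' : FreeGroup (Fin n)) (k : ℕ) [NeZero k] (i : ℤ) :
    Fin k → FreeGroup (Fin n × ℤ) :=
  fun t => if t = 0 then (VW u' i)⁻¹ else 1

/-- substituted words going down -/
noncomputable def Vdn (u' : FreeGroup (Fin n)) (k : ℕ) [NeZero k] (i : ℤ) :
    Fin k → FreeGroup (Fin n × ℤ) :=
  fun t => if t = (0 : Fin k) - 1 then (VW u' i) else 1

lemma fup_inj : Function.Injective (fup k) := fun a b h => by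
  have := congrArg (· + 1) h
  simpa [fup] using this

lemma fdn_inj : Function.Injective (fdn k) := fun a b h => by
  have := congrArg (· - 1) h
  simpa [fdn] using this

lemma fdn_fup (a : Fin k) : fdn k (fup k a) = a := by simp [fdn, fup]

lemma fup_fdn (a : Fin k) : fup k (fdn k a) = a := by simp [fdn, fup]

include hb hy in
lemma trans_up (i : ℤ) (v : ↥φ.ker) :
    (basis (i + 1)).repr v = TT (fup k) (Vup u' k i) ((basis i).repr v) := by
  have hcomp : ((basis (i + 1)).repr.toMonoidHom.comp (basis i).repr.symm.toMonoidHom)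
      = TT (fup k) (Vup u' k i) := by
    apply FreeGroup.ext_hom
    intro s
    simp only [MonoidHom.comp_apply, MulEquiv.coe_toMonoidHom]
    rw [show (basis i).repr.symm (FreeGroup.of s) = basis i s from rfl]
    rcases s with t | p
    · by_cases ht : t = (0 : Fin k)
      · subst ht
        have hbi : (basis i) (Sum.inl (0 : Fin k)) =
            (basis (i + 1)) (Sum.inl ((0 : Fin k) - 1)) *
              ((basis (i + 1)).repr.symm (yin (A := Fin k) (VW u' i)))⁻¹ := by
          apply Subtype.ext
          rw [Subgroup.coe_mul]
          rw [show ((((basis (i + 1)).repr.symm (yin (A := Fin k)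
            (VW u' i)))⁻¹ : ↥φ.ker) : Hgp k n u') =
            (((basis (i + 1)).repr.symm (yin (A := Fin k)
              (VW u' i)) : ↥φ.ker) : Hgp k n u')⁻¹ from rfl]
          rw [hb, hb, hUval basis hy]
          have h1 : (((0 : Fin k) - 1 : Fin k) : ℕ) = k - 1 := by
            rw [fin_sub_one_val]
            simp
          have h2 : ((0 : Fin k) : ℕ) = 0 := Fin.val_zero k
          rw [h1, h2]
          have h3 : (i + 1) + ((k - 1 : ℕ) : ℤ) = i + (k : ℤ) := by
            have hk1 : 1 ≤ k := Nat.pos_of_ne_zero (NeZero.ne k)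
            push_cast [hk1]
            omega
          rw [h3]
          have h4 := reln k n u' i
          rw [Nat.cast_zero, add_zero, h4, mul_inv_cancel_right]
        rw [hbi, _root_.map_mul, _root_.map_inv]
        rw [FreeGroupBasis.repr_apply_coe, MulEquiv.apply_symm_apply]
        rw [TT_of_inl]
        rw [show Vup u' k i 0 = (VW u' i)⁻¹ from if_pos rfl]
        rw [_root_.map_inv]
        rfl
      · have hbi : (basis i) (Sum.inl t) = (basis (i + 1)) (Sum.inl (t - 1)) := by
          apply Subtype.ext
          rw [hb, hb]
          congr 1
          rw [fin_sub_one_val, if_neg (fun hcon => ht (Fin.ext (by rw [hcon, Fin.val_zero])))]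
          have ht1 : 1 ≤ (t : ℕ) := by
            rcases Nat.eq_zero_or_pos (t : ℕ) with h | h
            · exact absurd (Fin.ext (by rw [h, Fin.val_zero])) ht
            · exact h
          push_cast [ht1]
          omega
        rw [hbi, FreeGroupBasis.repr_apply_coe, TT_of_inl]
        rw [show Vup u' k i t = 1 from if_neg ht, _root_.map_one, mul_one]
        rfl
    · obtain ⟨m, jj⟩ := p
      have hbi : (basis i) (Sum.inr (m, jj)) = (basis (i + 1)) (Sum.inr (m, jj)) := by
        apply Subtype.ext
        rw [hy, hy]
      rw [hbi, FreeGroupBasis.repr_apply_coe, TT_of_inr]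
  have h := DFunLike.congr_fun hcomp ((basis i).repr v)
  simpa only [MonoidHom.comp_apply, MulEquiv.coe_toMonoidHom, MulEquiv.symm_apply_apply] using h

include hb hy in
lemma trans_dn (i : ℤ) (v : ↥φ.ker) :
    (basis i).repr v = TT (fdn k) (Vdn u' k i) ((basis (i + 1)).repr v) := by
  have hcomp : ((basis i).repr.toMonoidHom.comp (basis (i + 1)).repr.symm.toMonoidHom)
      = TT (fdn k) (Vdn u' k i) := by
    apply FreeGroup.ext_hom
    intro s
    simp only [MonoidHom.comp_apply, MulEquiv.coe_toMonoidHom]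
    rw [show (basis (i + 1)).repr.symm (FreeGroup.of s) = basis (i + 1) s from rfl]
    rcases s with t | p
    · by_cases ht : t = (0 : Fin k) - 1
      · subst ht
        have hbi : (basis (i + 1)) (Sum.inl ((0 : Fin k) - 1)) =
            (basis i) (Sum.inl (0 : Fin k)) *
              ((basis i).repr.symm (yin (A := Fin k) (VW u' i))) := by
          apply Subtype.ext
          rw [Subgroup.coe_mul]
          rw [hb, hb, hUval basis hy]
          have h1 : (((0 : Fin k) - 1 : Fin k) : ℕ) = k - 1 := by
            rw [fin_sub_one_val]
            simp
          have h2 : ((0 : Fin k) : ℕ) = 0 := Fin.val_zero k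
          rw [h1, h2]
          have h3 : (i + 1) + ((k - 1 : ℕ) : ℤ) = i + (k : ℤ) := by
            have hk1 : 1 ≤ k := Nat.pos_of_ne_zero (NeZero.ne k)
            push_cast [hk1]
            omega
          rw [h3, Nat.cast_zero, add_zero]
          exact reln k n u' i
        rw [hbi, _root_.map_mul]
        rw [FreeGroupBasis.repr_apply_coe, MulEquiv.apply_symm_apply]
        rw [TT_of_inl]
        rw [show Vdn u' k i ((0 : Fin k) - 1) = VW u' i from if_pos rfl]
        simp [fdn]
      · have htv : (t : ℕ) ≠ k - 1 := by
          intro hcon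
          apply ht
          apply Fin.ext
          rw [hcon, fin_sub_one_val]
          simp
        have hbi : (basis (i + 1)) (Sum.inl t) = (basis i) (Sum.inl (t + 1)) := by
          apply Subtype.ext
          rw [hb, hb]
          congr 1
          rw [fin_add_one_val, if_neg htv]
          push_cast
          omega
        rw [hbi, FreeGroupBasis.repr_apply_coe, TT_of_inl]
        rw [show Vdn u' k i t = 1 from if_neg ht, _root_.map_one, mul_one]
        rfl
    · obtain ⟨m, jj⟩ := p
      have hbi : (basis (i + 1)) (Sum.inr (m, jj)) = (basis i) (Sum.inr (m, jj)) := by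
        apply Subtype.ext
        rw [hy, hy]
      rw [hbi, FreeGroupBasis.repr_apply_coe, TT_of_inr]
  have h := DFunLike.congr_fun hcomp ((basis (i + 1)).repr v)
  simpa only [MonoidHom.comp_apply, MulEquiv.coe_toMonoidHom, MulEquiv.symm_apply_apply] using h

include hb hy in
lemma inv_up (i : ℤ) (z : FreeGroup (Fin k ⊕ Fin n × ℤ)) :
    TT (fdn k) (Vdn u' k i) (TT (fup k) (Vup u' k i) z) = z := by
  have h1 : (basis i).repr ((basis i).repr.symm z) = z := MulEquiv.apply_symm_apply _ _
  rw [← h1, ← trans_up basis hb hy i, ← trans_dn basis hb hy i]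

include hb hy in
lemma inv_dn (i : ℤ) (z : FreeGroup (Fin k ⊕ Fin n × ℤ)) :
    TT (fup k) (Vup u' k i) (TT (fdn k) (Vdn u' k i) z) = z := by
  have h1 : (basis (i + 1)).repr ((basis (i + 1)).repr.symm z) = z :=
    MulEquiv.apply_symm_apply _ _
  rw [← h1, ← trans_dn basis hb hy i, ← trans_up basis hb hy i]

include hy in
lemma yin_indep (j : ℤ) (w : FreeGroup (Fin n × ℤ)) :
    (basis j).repr.symm (yin (A := Fin k) w) = (basis 0).repr.symm (yin (A := Fin k) w) := by
  have hcomp : ((basis j).repr.symm.toMonoidHom.comp (yin (A := Fin k) (B := Fin n × ℤ)))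
      = ((basis 0).repr.symm.toMonoidHom.comp (yin (A := Fin k) (B := Fin n × ℤ))) := by
    apply FreeGroup.ext_hom
    intro b
    obtain ⟨m, jj⟩ := b
    simp only [MonoidHom.comp_apply, MulEquiv.coe_toMonoidHom]
    rw [show (yin (A := Fin k) (FreeGroup.of (m, jj))) = FreeGroup.of
      (Sum.inr (m, jj) : Fin k ⊕ Fin n × ℤ) from FreeGroup.map.of]
    rw [show (basis j).repr.symm (FreeGroup.of (Sum.inr (m, jj) : Fin k ⊕ Fin n × ℤ)) =
      basis j (Sum.inr (m, jj)) from rfl]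
    rw [show (basis 0).repr.symm (FreeGroup.of (Sum.inr (m, jj) : Fin k ⊕ Fin n × ℤ)) =
      basis 0 (Sum.inr (m, jj)) from rfl]
    apply Subtype.ext
    rw [hy, hy]
  have h := DFunLike.congr_fun hcomp w
  simpa only [MonoidHom.comp_apply, MulEquiv.coe_toMonoidHom] using h

end Trans

end SuitCnj2


/-- Corollary 3.4: every non-trivial `r ∈ N` has a conjugate `r̃` (in `N`) whose reduced word
in every basis `B(i)` of `N` is cyclically reduced (a *suitable conjugate*). -/
theorem exists_suitable_conjugate (k n : ℕ) (hk : 1 ≤ k) (hn : 1 ≤ n)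
    (u' : FreeGroup (Fin n)) (hu : u' ≠ 1)
    (φ : Hgp k n u' →* Multiplicative ℤ) (hφ : IsExpSum k n u' φ)
    (basis : ∀ i : ℤ, FreeGroupBasis (Fin k ⊕ Fin n × ℤ) ↥φ.ker)
    (hb : ∀ i : ℤ, ∀ t : Fin k,
      ((basis i) (Sum.inl t) : Hgp k n u') = bi k n u' (i + (t : ℕ)))
    (hy : ∀ i : ℤ, ∀ m : Fin n, ∀ j : ℤ,
      ((basis i) (Sum.inr (m, j)) : Hgp k n u') = yi k n u' m j)
    (r : Hgp k n u') (hr : r ∈ φ.ker) (hr1 : r ≠ 1) :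
    ∃ rt : ↥φ.ker, (∃ g : ↥φ.ker, g⁻¹ * ⟨r, hr⟩ * g = rt) ∧
      ∀ i : ℤ, IsCyclicallyReducedWord (((basis i).repr rt).toWord) := by
  haveI : NeZero k := ⟨by omega⟩
  have main : ∀ (rt : ↥φ.ker),
      (∃ a : Fin k, SuitCnj.HeadIs ((basis 0).repr rt) (Sum.inl a, true)) →
      IsCyclicallyReducedWord (((basis 0).repr rt).toWord) →
      ∀ i : ℤ, (∃ a : Fin k, SuitCnj.HeadIs ((basis i).repr rt) (Sum.inl a, true)) ∧
        IsCyclicallyReducedWord (((basis i).repr rt).toWord) := by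
    intro rt h0 hc0 i
    induction i using Int.induction_on with
    | zero => exact ⟨h0, hc0⟩
    | succ j ihj =>
      obtain ⟨⟨a, ha⟩, hcyc⟩ := ihj
      have hup := SuitCnj2.trans_up basis hb hy (j : ℤ) rt
      have hres := SuitCnj.cycred_TT (SuitCnj2.fup k) (SuitCnj2.Vup u' k j)
        SuitCnj2.fup_inj (SuitCnj2.fdn k) (SuitCnj2.Vdn u' k j) SuitCnj2.fdn_inj
        (SuitCnj2.inv_up basis hb hy (j : ℤ)) SuitCnj2.fdn_fup ha hcyc
      rw [← hup] at hres
      exact ⟨⟨SuitCnj2.fup k a, hres.1⟩, hres.2⟩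
    | pred j ihj =>
      obtain ⟨⟨a, ha⟩, hcyc⟩ := ihj
      have hdn := SuitCnj2.trans_dn basis hb hy (-(j : ℤ) - 1) rt
      have he : (-(j : ℤ) - 1) + 1 = -(j : ℤ) := by ring
      rw [he] at hdn
      have hres := SuitCnj.cycred_TT (SuitCnj2.fdn k) (SuitCnj2.Vdn u' k (-(j : ℤ) - 1))
        SuitCnj2.fdn_inj (SuitCnj2.fup k) (SuitCnj2.Vup u' k (-(j : ℤ) - 1)) SuitCnj2.fup_inj
        (SuitCnj2.inv_dn basis hb hy (-(j : ℤ) - 1)) SuitCnj2.fup_fdn ha hcyc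
      rw [← hdn] at hres
      exact ⟨⟨SuitCnj2.fdn k a, hres.1⟩, hres.2⟩
  set x0 : ↥φ.ker := (⟨r, hr⟩ : ↥φ.ker) with hx0
  -- builder for the case where a cyclically reduced conjugate has a positive b-letter
  have build : ∀ z1 : FreeGroup (Fin k ⊕ Fin n × ℤ), IsCyclicallyReducedWord z1.toWord →
      (∃ a : Fin k, (Sum.inl a, true) ∈ z1.toWord) →
      ∃ (q : FreeGroup (Fin k ⊕ Fin n × ℤ)) (rt : ↥φ.ker),
        rt = (basis 0).repr.symm (q⁻¹ * z1 * q) ∧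
          ∀ i : ℤ, IsCyclicallyReducedWord (((basis i).repr rt).toWord) := by
    intro z1 hz1cyc ⟨a, hmem⟩
    obtain ⟨P, Q, hPQ⟩ := List.append_of_mem hmem
    have hredz1 : SuitCnj.Reduced (P ++ (Sum.inl a, true) :: Q) :=
      hPQ ▸ SuitCnj.reduced_toWord z1
    have hcycz1 : IsCyclicallyReducedWord (P ++ (Sum.inl a, true) :: Q) := hPQ ▸ hz1cyc
    obtain ⟨hrednew, hcycnew, hmknew⟩ := SuitCnj.rotate_cycred hredz1 hcycz1
    rw [← hPQ, FreeGroup.mk_toWord] at hmknew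
    refine ⟨FreeGroup.mk P, (basis 0).repr.symm
      (FreeGroup.mk ((Sum.inl a, true) :: (Q ++ P))), by rw [hmknew], ?_⟩
    intro i
    have h00 : (basis 0).repr ((basis 0).repr.symm
        (FreeGroup.mk ((Sum.inl a, true) :: (Q ++ P)))) =
        FreeGroup.mk ((Sum.inl a, true) :: (Q ++ P)) := MulEquiv.apply_symm_apply _ _
    refine (main _ ⟨a, ?_⟩ ?_ i).2
    · rw [SuitCnj.HeadIs, h00, SuitCnj.toWord_mk_of_reduced hrednew]
      rfl
    · rw [h00, SuitCnj.toWord_mk_of_reduced hrednew]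
      exact hcycnew
  -- cyclically reduce in basis 0
  obtain ⟨c, z1, hz1, hz1cyc⟩ := SuitCnj.exists_cycred_conj ((basis 0).repr x0)
  have hfin : ∀ (q : FreeGroup (Fin k ⊕ Fin n × ℤ)) (rt : ↥φ.ker),
      rt = (basis 0).repr.symm (q⁻¹ * z1 * q) →
      ∃ g : ↥φ.ker, g⁻¹ * x0 * g = rt := by
    intro q rt hrt
    refine ⟨(basis 0).repr.symm (c * q), ?_⟩
    have hq : q⁻¹ * z1 * q = (c * q)⁻¹ * (basis 0).repr x0 * (c * q) := by
      rw [hz1]; group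
    rw [hrt, hq]
    simp only [_root_.map_mul, _root_.map_inv, MulEquiv.symm_apply_apply, mul_assoc]
  rcases Classical.em (∃ a : Fin k, (Sum.inl a, true) ∈ z1.toWord) with hpos | hpos
  · obtain ⟨q, rt, hrt, hall⟩ := build z1 hz1cyc hpos
    exact ⟨rt, hfin q rt hrt, hall⟩
  rcases Classical.em (∃ a : Fin k, (Sum.inl a, false) ∈ z1.toWord) with hneg | hneg
  · -- use the inverse
    have hinvcyc : IsCyclicallyReducedWord (z1⁻¹).toWord := by
      rw [FreeGroup.toWord_inv]
      exact SuitCnj.cycred_invRev hz1cyc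
    have hinvpos : ∃ a : Fin k, (Sum.inl a, true) ∈ (z1⁻¹).toWord := by
      obtain ⟨a, ha⟩ := hneg
      refine ⟨a, ?_⟩
      rw [FreeGroup.toWord_inv, FreeGroup.invRev]
      rw [List.mem_reverse, List.mem_map]
      exact ⟨(Sum.inl a, false), ha, rfl⟩
    obtain ⟨q, rt', hrt', hall⟩ := build z1⁻¹ hinvcyc hinvpos
    refine ⟨rt'⁻¹, hfin q rt'⁻¹ ?_, ?_⟩
    · rw [hrt', ← _root_.map_inv]
      congr 1
      group
    · intro i
      rw [_root_.map_inv, FreeGroup.toWord_inv]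
      exact SuitCnj.cycred_invRev (hall i)
  · -- pure y-word
    have hallY : ∀ p ∈ z1.toWord, ∃ b : Fin n × ℤ, p.1 = Sum.inr b := by
      intro p hp
      rcases hq : p.1 with a | b
      · exfalso
        have hpeq : p = (Sum.inl a, p.2) := by rw [← hq]
        rcases hs : p.2 with - | -
        · exact hneg ⟨a, by rw [← hs, ← hpeq]; exact hp⟩
        · exact hpos ⟨a, by rw [← hs, ← hpeq]; exact hp⟩
      · exact ⟨b, rfl⟩
    obtain ⟨w, hw⟩ := SuitCnj.exists_yin_of_allY hallY
    rw [FreeGroup.mk_toWord] at hw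
    refine ⟨(basis 0).repr.symm z1, hfin 1 _ (by rw [inv_one, one_mul, mul_one]), ?_⟩
    intro i
    have hri : (basis i).repr ((basis 0).repr.symm z1) = z1 := by
      rw [← hw, ← SuitCnj2.yin_indep basis hy i w, MulEquiv.apply_symm_apply]
    rw [hri]
    exact hz1cyc
end

section
/- Let H = ⟨x, b, y₁,…,yₙ | [xᵏ,b]u⟩ with k, n ≥ 1 and u a non-trivial reduced word in y₁,…,yₙ. Then the subgroup H̃ of H generated by x and b is free of rank 2, and H decomposes as the amalgamated product H = H̃ *_{[xᵏ,b]=u⁻¹} F, where F is the free group on y₁,…,yₙ, amalgamating the infinite cyclic subgroup generated by [xᵏ,b] in H̃ with the infinite cyclic subgroup generated by u⁻¹ in F. -/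
/-! Setup: `H̃` is the free group on `{x, b}` (modelled as `FreeGroup Bool`, `true ↦ x`,
`false ↦ b`), `F` is the free group on `{y₁, …, yₙ}`, and
`H = H̃ *_{[xᵏ,b] = u⁻¹} F` is the amalgamated product over infinite cyclic subgroups,
realised as the pushout of the two maps `ℤ → H̃`, `ℤ → F` sending a generator of `ℤ` to
`[xᵏ,b]` and `u⁻¹` respectively. -/

/-- The word `[xᵏ,b] = x⁻ᵏb⁻¹xᵏb` in the free group on `{x, b}`. -/
def commWord (k : ℕ) : FreeGroup Bool :=
  ((FreeGroup.of true)⁻¹) ^ k * (FreeGroup.of false)⁻¹ * (FreeGroup.of true) ^ k *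
    FreeGroup.of false

/-- The two factors `H̃ = FreeGroup Bool` and `F = FreeGroup (Fin n)`. -/
def Fac (n : ℕ) : Bool → Type := fun i =>
  match i with
  | true => FreeGroup Bool
  | false => FreeGroup (Fin n)

instance (n : ℕ) : (i : Bool) → Group (Fac n i) := fun i =>
  match i with
  | true => inferInstanceAs (Group (FreeGroup Bool))
  | false => inferInstanceAs (Group (FreeGroup (Fin n)))

/-- The diagram of maps from the amalgamated copy of `ℤ` into the two factors, sending the
generator to `[xᵏ,b]` and to `u⁻¹` respectively. -/
def amalMaps (k n : ℕ) (u' : FreeGroup (Fin n)) :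
    ∀ i : Bool, Multiplicative ℤ →* Fac n i := fun i =>
  match i with
  | true => zpowersHom (FreeGroup Bool) (commWord k)
  | false => zpowersHom (FreeGroup (Fin n)) u'⁻¹

/-- The amalgamated product `H = H̃ *_{[xᵏ,b]=u⁻¹} F`. -/
abbrev Amal (k n : ℕ) (u' : FreeGroup (Fin n)) : Type :=
  Monoid.PushoutI (amalMaps k n u')

namespace HgpAux

section TorsionFree


open FreeGroup

variable {α : Type*} [DecidableEq α]

/-- The non-cancellation relation between adjacent letters. -/
def Rc : (α × Bool) → (α × Bool) → Prop := fun a b => ¬(a.1 = b.1 ∧ a.2 = !b.2)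

theorem reduce_eq_self_of_chain' : ∀ {L : List (α × Bool)}, List.Chain' Rc L →
    FreeGroup.reduce L = L := by
  intro L
  induction L with
  | nil => intro _; rfl
  | cons x T ih =>
    intro h
    have hT : FreeGroup.reduce T = T := ih h.tail
    rw [FreeGroup.reduce.cons, hT]
    cases T with
    | nil => rfl
    | cons hd tl =>
      have hr : Rc x hd := (List.isChain_cons_cons.1 h).1
      simp only [Rc] at hr
      simp [hr]

theorem chain'_of_reduce_eq_self : ∀ {L : List (α × Bool)}, FreeGroup.reduce L = L →
    List.Chain' Rc L := by
  intro L
  induction L with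
  | nil => intro _; exact List.isChain_nil
  | cons x T ih =>
    intro h
    rw [FreeGroup.reduce.cons] at h
    have hlen : (FreeGroup.reduce T).length ≤ T.length :=
      FreeGroup.Red.length_le (FreeGroup.reduce.red)
    rcases hT : FreeGroup.reduce T with _ | ⟨hd, tl⟩
    · rw [hT] at h
      injection h with _ h2
      subst h2
      exact List.isChain_singleton x
    · rw [hT] at h hlen
      dsimp only at h
      by_cases hc : x.1 = hd.1 ∧ x.2 = !hd.2
      · rw [if_pos hc] at h
        have := congrArg List.length h
        simp only [List.length_cons] at this hlen
        omega
      · rw [if_neg hc] at h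
        injection h with _ h2
        subst h2
        exact List.isChain_cons_cons.2 ⟨hc, ih hT⟩

theorem chain'_toWord (x : FreeGroup α) : List.Chain' Rc x.toWord :=
  chain'_of_reduce_eq_self (FreeGroup.reduce_toWord x)

theorem mk_pow_ne_one {L : List (α × Bool)} (hL : L ≠ []) (hch : List.Chain' Rc L)
    (hcyc : ∀ a ∈ L.getLast?, ∀ b ∈ L.head?, Rc a b) (m : ℕ) :
    FreeGroup.mk L ^ (m + 1) ≠ 1 := by
  suffices h : ∃ W : List (α × Bool), W ≠ [] ∧ List.Chain' Rc W ∧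
      W.getLast? = L.getLast? ∧ FreeGroup.mk L ^ (m + 1) = FreeGroup.mk W by
    obtain ⟨W, hW, hch', _, hpow⟩ := h
    intro h1
    rw [hpow] at h1
    have h2 : W = [] := by
      have := FreeGroup.toWord_eq_nil_iff.2 h1
      rwa [FreeGroup.toWord_mk, reduce_eq_self_of_chain' hch'] at this
    exact hW h2
  induction m with
  | zero => exact ⟨L, hL, hch, rfl, by rw [pow_one]⟩
  | succ m ih =>
    obtain ⟨W, hW, hchW, hlast, hpow⟩ := ih
    refine ⟨W ++ L, by simp [hL], ?_, ?_, ?_⟩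
    · refine List.IsChain.append hchW hch ?_
      rw [hlast]; exact hcyc
    · rcases hLl : L.getLast? with _ | a
      · exact absurd (List.getLast?_eq_none_iff.1 hLl) hL
      · rw [List.getLast?_append, hLl]; rfl
    · rw [pow_succ, hpow, FreeGroup.mul_mk]

theorem cyclic_reduction : ∀ (N : ℕ) (L : List (α × Bool)), L.length ≤ N → L ≠ [] →
    List.Chain' Rc L →
    ∃ (g : FreeGroup α) (C : List (α × Bool)), C ≠ [] ∧ List.Chain' Rc C ∧
      (∀ a ∈ C.getLast?, ∀ b ∈ C.head?, Rc a b) ∧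
      FreeGroup.mk L = g * FreeGroup.mk C * g⁻¹ := by
  intro N
  induction N with
  | zero =>
    intro L hlen hne _
    exact absurd (List.length_eq_zero_iff.1 (Nat.le_zero.1 hlen)) hne
  | succ N ih =>
    intro L hlen hne hch
    by_cases hcyc : ∀ a ∈ L.getLast?, ∀ b ∈ L.head?, Rc a b
    · exact ⟨1, L, hne, hch, hcyc, by group⟩
    · push_neg at hcyc
      obtain ⟨a, ha, c, hb, hab⟩ := hcyc
      have hab' : a.1 = c.1 ∧ a.2 = !c.2 := not_not.1 hab
      rcases L with _ | ⟨c', T⟩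
      · exact absurd rfl hne
      have hcc : c' = c := by simpa [Option.mem_def] using hb
      obtain rfl : c = c' := hcc.symm
      have hTne : T ≠ [] := by
        rintro rfl
        obtain rfl : c = a := by simpa [Option.mem_def] using ha
        simpa using hab'.2
      have hTlast : T.getLast? = some a := by
        rcases T with _ | ⟨t, T'⟩
        · exact absurd rfl hTne
        · simpa [Option.mem_def, List.getLast?_cons_cons] using ha
      obtain ⟨M, rfl⟩ : ∃ M, T = M ++ [a] := by
        rcases List.getLast?_eq_some_iff.1 hTlast with ⟨M, hM⟩
        exact ⟨M, hM⟩
      have hMne : M ≠ [] := by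
        rintro rfl
        simp only [List.nil_append] at hch
        have := (List.isChain_cons_cons.1 hch).1
        exact this ⟨hab'.1.symm, by rw [hab'.2]; simp⟩
      have hMch : List.Chain' Rc M := hch.infix ⟨[c], [a], by simp⟩
      obtain ⟨g, C, hCne, hCch, hCcyc, hCeq⟩ := ih M (by
        simp only [List.length_cons, List.length_append, List.length_singleton] at hlen ⊢
        omega) hMne hMch
      refine ⟨FreeGroup.mk [c] * g, C, hCne, hCch, hCcyc, ?_⟩
      have hainv : FreeGroup.mk [a] = (FreeGroup.mk [c])⁻¹ := by
        rw [FreeGroup.inv_mk]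
        congr 1
        simp [FreeGroup.invRev, Prod.ext_iff, hab'.1, hab'.2]
      calc FreeGroup.mk (c :: (M ++ [a]))
          = FreeGroup.mk [c] * FreeGroup.mk M * FreeGroup.mk [a] := by
            rw [FreeGroup.mul_mk, FreeGroup.mul_mk]; rfl
        _ = FreeGroup.mk [c] * (g * FreeGroup.mk C * g⁻¹) * (FreeGroup.mk [c])⁻¹ := by
            rw [hCeq, hainv]
        _ = (FreeGroup.mk [c] * g) * FreeGroup.mk C * (FreeGroup.mk [c] * g)⁻¹ := by group

theorem pow_ne_one_of_ne_one {x : FreeGroup α} (hx : x ≠ 1) (m : ℕ) : x ^ (m + 1) ≠ 1 := by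
  have hL : x.toWord ≠ [] := fun h => hx (FreeGroup.toWord_eq_nil_iff.1 h)
  obtain ⟨g, C, hCne, hCch, hCcyc, hCeq⟩ :=
    cyclic_reduction x.toWord.length x.toWord le_rfl hL (chain'_toWord x)
  have hxeq : x = g * FreeGroup.mk C * g⁻¹ := by
    rw [← FreeGroup.mk_toWord (x := x), hCeq]
  rw [hxeq, conj_pow]
  intro h
  have : FreeGroup.mk C ^ (m + 1) = 1 := by
    have := congrArg (fun z => g⁻¹ * z * g) h
    simpa [mul_assoc] using this
  exact mk_pow_ne_one hCne hCch hCcyc m this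

theorem zpow_ne_one_of_ne_one {x : FreeGroup α} (hx : x ≠ 1) {m : ℤ} (hm : m ≠ 0) :
    x ^ m ≠ 1 := by
  rcases lt_trichotomy m 0 with h | h | h
  · intro h1
    have : x ^ (-m) ≠ 1 := by
      obtain ⟨p, hp⟩ : ∃ p : ℕ, -m = (p : ℤ) + 1 := by
        refine ⟨(-m - 1).toNat, ?_⟩; omega
      rw [hp]
      have := pow_ne_one_of_ne_one hx p
      rw [← zpow_natCast x (p + 1)] at this
      simpa using this
    apply this
    rw [zpow_neg, h1, inv_one]
  · exact absurd h hm
  · obtain ⟨p, hp⟩ : ∃ p : ℕ, m = (p : ℤ) + 1 := ⟨(m - 1).toNat, by omega⟩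
    rw [hp]
    have := pow_ne_one_of_ne_one hx p
    rw [← zpow_natCast x (p + 1)] at this
    simpa using this

theorem zpowersHom_injective_of {G : Type*} [Group G] {g : G}
    (h : ∀ m : ℤ, m ≠ 0 → g ^ m ≠ 1) : Function.Injective (zpowersHom G g) := by
  intro m1 m2 h12
  simp only [zpowersHom_apply] at h12
  by_contra hne
  have hne' : Multiplicative.toAdd m1 - Multiplicative.toAdd m2 ≠ 0 := by
    intro h0
    apply hne
    have : Multiplicative.toAdd m1 = Multiplicative.toAdd m2 := by omega
    exact Multiplicative.toAdd.injective this
  exact h _ hne' (by rw [zpow_sub, h12, mul_inv_cancel])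

end TorsionFree

section Iso


variable (k n : ℕ) (u' : FreeGroup (Fin n))

/-- The images of the generators of `H` in the amalgam. -/
def fintoA : Bool ⊕ Fin n → Amal k n u'
  | Sum.inl c => Monoid.PushoutI.of (φ := amalMaps k n u') true (FreeGroup.of c)
  | Sum.inr m => Monoid.PushoutI.of (φ := amalMaps k n u') false (FreeGroup.of m)

theorem ofTrue_commWord :
    Monoid.PushoutI.of (φ := amalMaps k n u') true (commWord k) =
      Monoid.PushoutI.of (φ := amalMaps k n u') false u'⁻¹ := by
  have h1 := Monoid.PushoutI.of_apply_eq_base (amalMaps k n u') true (Multiplicative.ofAdd 1)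
  have h2 := Monoid.PushoutI.of_apply_eq_base (amalMaps k n u') false (Multiplicative.ofAdd 1)
  have e1 : amalMaps k n u' true (Multiplicative.ofAdd 1) = commWord k := by
    show (commWord k) ^ (1 : ℤ) = commWord k
    simp
  have e2 : amalMaps k n u' false (Multiplicative.ofAdd 1) = u'⁻¹ := by
    show (u'⁻¹) ^ (1 : ℤ) = u'⁻¹
    simp
  rw [e1] at h1; rw [e2] at h2; exact h1.trans h2.symm

theorem lift_map_inr :
    (FreeGroup.lift (fintoA k n u')).comp (FreeGroup.map Sum.inr) =
      Monoid.PushoutI.of (φ := amalMaps k n u') false := by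
  ext m
  show FreeGroup.lift (fintoA k n u') (FreeGroup.map Sum.inr (FreeGroup.of m)) = _
  rw [FreeGroup.map.of, FreeGroup.lift_apply_of]
  rfl

theorem lift_map_inl :
    (FreeGroup.lift (fintoA k n u')).comp (FreeGroup.map Sum.inl) =
      Monoid.PushoutI.of (φ := amalMaps k n u') true := by
  ext c
  show FreeGroup.lift (fintoA k n u') (FreeGroup.map Sum.inl (FreeGroup.of c)) = _
  rw [FreeGroup.map.of, FreeGroup.lift_apply_of]
  rfl

theorem rel_decomp : ((FreeGroup.of (Sum.inl true : Bool ⊕ Fin n))⁻¹) ^ k *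
    (FreeGroup.of (Sum.inl false))⁻¹ * (FreeGroup.of (Sum.inl true)) ^ k *
    FreeGroup.of (Sum.inl false) = FreeGroup.map Sum.inl (commWord k) := by
  simp [commWord]

theorem lift_rel_eq_one : ∀ r ∈ relOfH k n u', FreeGroup.lift (fintoA k n u') r = 1 := by
  intro r hr
  rw [relOfH, Set.mem_singleton_iff] at hr
  subst hr
  have h3 : FreeGroup.lift (fintoA k n u') (FreeGroup.map Sum.inr u') =
      Monoid.PushoutI.of (φ := amalMaps k n u') false u' :=
    DFunLike.congr_fun (lift_map_inr k n u') u'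
  have h2 : FreeGroup.lift (fintoA k n u') (FreeGroup.map Sum.inl (commWord k)) =
      Monoid.PushoutI.of (φ := amalMaps k n u') true (commWord k) :=
    DFunLike.congr_fun (lift_map_inl k n u') (commWord k)
  rw [map_mul, rel_decomp, h2, h3, ofTrue_commWord]
  erw [← map_mul]
  exact (congrArg _ (inv_mul_cancel u')).trans (map_one _)

/-- `x ↦ x`, `b ↦ b` from `FreeGroup Bool` to `H`. -/
def jT : FreeGroup Bool →* Hgp k n u' :=
  FreeGroup.lift (fun c => if c then xg k n u' else bg k n u')

/-- `yₘ ↦ yₘ` from `FreeGroup (Fin n)` to `H`. -/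
def jF : FreeGroup (Fin n) →* Hgp k n u' := FreeGroup.lift (yg k n u')

theorem mk_map_inr :
    (PresentedGroup.mk (relOfH k n u')).comp (FreeGroup.map Sum.inr) = jF k n u' := by
  ext m
  simp [jF, yg, PresentedGroup.of]

theorem keyRel : jT k n u' (commWord k) = (jF k n u' u')⁻¹ := by
  have h0 : PresentedGroup.mk (relOfH k n u')
      (((FreeGroup.of (Sum.inl true))⁻¹) ^ k * (FreeGroup.of (Sum.inl false))⁻¹ *
        (FreeGroup.of (Sum.inl true)) ^ k * FreeGroup.of (Sum.inl false) *
        FreeGroup.map Sum.inr u') = 1 := by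
    apply (QuotientGroup.eq_one_iff _).2
    exact Subgroup.subset_normalClosure rfl
  have h4 : PresentedGroup.mk (relOfH k n u') (FreeGroup.map Sum.inr u') = jF k n u' u' :=
    DFunLike.congr_fun (mk_map_inr k n u') u'
  have h5 : (PresentedGroup.mk (relOfH k n u')).comp (FreeGroup.map Sum.inl) = jT k n u' := by
    ext c
    show PresentedGroup.mk (relOfH k n u') (FreeGroup.map Sum.inl (FreeGroup.of c)) = _
    rw [FreeGroup.map.of]
    cases c
    · have : jT k n u' (FreeGroup.of false) = bg k n u' := by simp [jT]
      rw [this]; rfl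
    · have : jT k n u' (FreeGroup.of true) = xg k n u' := by simp [jT]
      rw [this]; rfl
  have h6 : PresentedGroup.mk (relOfH k n u') (FreeGroup.map Sum.inl (commWord k)) =
      jT k n u' (commWord k) := DFunLike.congr_fun h5 (commWord k)
  rw [map_mul, rel_decomp, h6, h4] at h0
  exact eq_inv_of_mul_eq_one_left h0

/-- The factor maps into `H`. -/
def jfac : ∀ i : Bool, Fac n i →* Hgp k n u' := fun i =>
  match i with
  | true => jT k n u'
  | false => jF k n u'

theorem compat : ∀ i, (jfac k n u' i).comp (amalMaps k n u' i) =
    (jT k n u').comp (amalMaps k n u' true) := by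
  intro i
  cases i with
  | true => rfl
  | false =>
    apply MonoidHom.ext_mint
    show jF k n u' ((u'⁻¹) ^ (1 : ℤ)) = jT k n u' ((commWord k) ^ (1 : ℤ))
    simp only [zpow_one, map_inv]
    rw [keyRel]

/-- The homomorphism from the amalgam to `H`. -/
def gmap : Amal k n u' →* Hgp k n u' :=
  Monoid.PushoutI.lift (jfac k n u') ((jT k n u').comp (amalMaps k n u' true)) (compat k n u')

/-- The homomorphism from `H` to the amalgam. -/
def fmap : Hgp k n u' →* Amal k n u' :=
  PresentedGroup.toGroup (lift_rel_eq_one k n u')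

theorem fmap_of (s : Bool ⊕ Fin n) : fmap k n u' (PresentedGroup.of s) = fintoA k n u' s :=
  PresentedGroup.toGroup.of _

theorem gf : (gmap k n u').comp (fmap k n u') = MonoidHom.id _ := by
  apply PresentedGroup.ext
  rintro (c | m)
  · cases c
    · show gmap k n u' (fmap k n u' (PresentedGroup.of (Sum.inl false))) = bg k n u'
      rw [fmap_of]
      show gmap k n u' (Monoid.PushoutI.of (φ := amalMaps k n u') true (FreeGroup.of false))
        = bg k n u'
      rw [gmap]; erw [Monoid.PushoutI.lift_of]
      show jT k n u' (FreeGroup.of false) = bg k n u'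
      simp [jT]
    · show gmap k n u' (fmap k n u' (PresentedGroup.of (Sum.inl true))) = xg k n u'
      rw [fmap_of]
      show gmap k n u' (Monoid.PushoutI.of (φ := amalMaps k n u') true (FreeGroup.of true))
        = xg k n u'
      rw [gmap]; erw [Monoid.PushoutI.lift_of]
      show jT k n u' (FreeGroup.of true) = xg k n u'
      simp [jT]
  · show gmap k n u' (fmap k n u' (PresentedGroup.of (Sum.inr m))) = yg k n u' m
    rw [fmap_of]
    show gmap k n u' (Monoid.PushoutI.of (φ := amalMaps k n u') false (FreeGroup.of m))
      = yg k n u' m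
    rw [gmap]; erw [Monoid.PushoutI.lift_of]
    show jF k n u' (FreeGroup.of m) = yg k n u' m
    simp [jF]

theorem fg : (fmap k n u').comp (gmap k n u') = MonoidHom.id _ := by
  apply Monoid.PushoutI.hom_ext_nonempty
  intro i
  cases i with
  | true =>
    refine FreeGroup.ext_hom _ _ fun c => ?_
    show fmap k n u' (gmap k n u'
      (Monoid.PushoutI.of (φ := amalMaps k n u') true (FreeGroup.of c))) = _
    rw [gmap]; erw [Monoid.PushoutI.lift_of]
    cases c
    · show fmap k n u' (jT k n u' (FreeGroup.of false)) = _
      have : jT k n u' (FreeGroup.of false) = bg k n u' := by simp [jT]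
      rw [this]
      exact fmap_of k n u' (Sum.inl false)
    · show fmap k n u' (jT k n u' (FreeGroup.of true)) = _
      have : jT k n u' (FreeGroup.of true) = xg k n u' := by simp [jT]
      rw [this]
      exact fmap_of k n u' (Sum.inl true)
  | false =>
    refine FreeGroup.ext_hom _ _ fun m => ?_
    show fmap k n u' (gmap k n u'
      (Monoid.PushoutI.of (φ := amalMaps k n u') false (FreeGroup.of m))) = _
    rw [gmap]; erw [Monoid.PushoutI.lift_of]
    show fmap k n u' (jF k n u' (FreeGroup.of m)) = _
    have : jF k n u' (FreeGroup.of m) = yg k n u' m := by simp [jF, yg]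
    rw [this]
    exact fmap_of k n u' (Sum.inr m)

/-- The isomorphism `H ≃* Amal`. -/
def eIso : Hgp k n u' ≃* Amal k n u' :=
  MonoidHom.toMulEquiv (fmap k n u') (gmap k n u') (gf k n u') (fg k n u')



theorem addLeft_pow (j : ℕ) : ∀ m : ℤ, ((Equiv.addLeft (1:ℤ) : Equiv.Perm ℤ)^j) m = j + m := by
  induction j with
  | zero => intro m; simp
  | succ j ih =>
    intro m
    rw [pow_succ, Equiv.Perm.mul_apply, show (Equiv.addLeft (1:ℤ) : Equiv.Perm ℤ) m = 1 + m
      from rfl, ih]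
    push_cast
    ring

theorem commWord_ne_one {k : ℕ} (hk : 1 ≤ k) : commWord k ≠ 1 := by
  intro h
  set A : Equiv.Perm ℤ := Equiv.addLeft (1:ℤ) with hA
  let P : FreeGroup Bool →* Equiv.Perm ℤ :=
    FreeGroup.lift (fun c : Bool => if c then A else Equiv.neg ℤ)
  have h0 := congrArg (fun w => P w 0) h
  simp only [P] at h0
  simp only [commWord, map_mul, map_pow, map_inv, FreeGroup.lift_apply_of, reduceIte, Bool.false_eq_true, if_false,
    map_one] at h0
  rw [inv_pow, show ((Equiv.neg ℤ : Equiv.Perm ℤ))⁻¹ = Equiv.neg ℤ from rfl] at h0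
  simp only [Equiv.Perm.mul_apply] at h0
  have e1 : (Equiv.neg ℤ) (0:ℤ) = 0 := by simp
  have e2 : (A^k) (0:ℤ) = k := by rw [addLeft_pow]; ring
  have e3 : (Equiv.neg ℤ) ((k:ℤ)) = -k := by simp
  have e4 : ((A^k)⁻¹ : Equiv.Perm ℤ) (-(k:ℤ)) = -(2*k) := by
    rw [Equiv.Perm.inv_def, Equiv.symm_apply_eq, addLeft_pow]
    ring
  rw [e1, e2, e3, e4] at h0
  have : (1:Equiv.Perm ℤ) (0:ℤ) = 0 := rfl
  rw [this] at h0
  omega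

variable (k n : ℕ) (u' : FreeGroup (Fin n))

theorem amal_inj (hk : 1 ≤ k) (hu : u' ≠ 1) :
    ∀ i, Function.Injective (amalMaps k n u' i) := by
  intro i
  cases i with
  | true =>
    exact zpowersHom_injective_of (fun m hm => zpow_ne_one_of_ne_one (commWord_ne_one hk) hm)
  | false =>
    exact zpowersHom_injective_of (fun m hm => zpow_ne_one_of_ne_one (inv_ne_one.2 hu) hm)

theorem gmap_inj : Function.Injective (gmap k n u') := by
  intro a b h
  have h1 := DFunLike.congr_fun (fg k n u') a
  have h2 := DFunLike.congr_fun (fg k n u') b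
  simp only [MonoidHom.coe_comp, Function.comp_apply, MonoidHom.id_apply] at h1 h2
  rw [← h1, ← h2, h]

theorem jT_eq_gmap_of (w : Fac n true) :
    jT k n u' w = gmap k n u' (Monoid.PushoutI.of (φ := amalMaps k n u') true w) := by
  rw [gmap]; erw [Monoid.PushoutI.lift_of]
  rfl

theorem jT_inj (hinj : ∀ i, Function.Injective (amalMaps k n u' i)) :
    Function.Injective (jT k n u') := by
  intro a b h
  erw [jT_eq_gmap_of, jT_eq_gmap_of] at h
  exact Monoid.PushoutI.of_injective hinj true (gmap_inj k n u' h)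

theorem jT_range : (jT k n u').range = Subgroup.closure {xg k n u', bg k n u'} := by
  rw [jT, FreeGroup.range_lift_eq_closure]
  congr 1
  ext g
  simp only [Set.mem_range, Set.mem_insert_iff, Set.mem_singleton_iff]
  constructor
  · rintro ⟨c, rfl⟩
    cases c
    · exact Or.inr (by simp)
    · exact Or.inl (by simp)
  · rintro (rfl | rfl)
    · exact ⟨true, by simp⟩
    · exact ⟨false, by simp⟩

/-- The free group basis of `⟨x, b⟩ ≤ H`. -/
noncomputable def theBasis (hinj : ∀ i, Function.Injective (amalMaps k n u' i)) :
    FreeGroupBasis Bool ↥(Subgroup.closure {xg k n u', bg k n u'}) :=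
  FreeGroupBasis.ofRepr
    (((MonoidHom.ofInjective (jT_inj k n u' hinj)).trans
      (MulEquiv.subgroupCongr (jT_range k n u'))).symm)

theorem theBasis_apply (hinj : ∀ i, Function.Injective (amalMaps k n u' i)) (c : Bool) :
    (theBasis k n u' hinj c : Hgp k n u') = jT k n u' (FreeGroup.of c) := by
  show ((((MonoidHom.ofInjective (jT_inj k n u' hinj)).trans
      (MulEquiv.subgroupCongr (jT_range k n u'))).symm.symm (FreeGroup.of c) :
        Subgroup.closure {xg k n u', bg k n u'}) : Hgp k n u') = _
  rw [MulEquiv.symm_symm]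
  rw [MulEquiv.trans_apply, MulEquiv.subgroupCongr_apply, MonoidHom.ofInjective_apply]

end Iso

end HgpAux

/-- (5.1): the subgroup `H̃ = ⟨x, b⟩` of `H = ⟨x, b, y₁,…,yₙ | [xᵏ,b]u⟩` is free of rank 2
(with free basis `{x, b}`), and `H` is (canonically isomorphic to) the amalgamated product
`H̃ *_{[xᵏ,b]=u⁻¹} F` of the free group `H̃` on `{x,b}` and the free group `F` on the `y`'s,
amalgamated over the infinite cyclic subgroups generated by `[xᵏ,b]` and `u⁻¹`. -/


theorem Hgp_amalgam_decomposition (k n : ℕ) (hk : 1 ≤ k) (hn : 1 ≤ n)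
    (u' : FreeGroup (Fin n)) (hu : u' ≠ 1) :
    (∃ basis : FreeGroupBasis Bool
        ↥(Subgroup.closure {xg k n u', bg k n u'}),
      (basis true : Hgp k n u') = xg k n u' ∧ (basis false : Hgp k n u') = bg k n u') ∧
    Function.Injective (zpowersHom (FreeGroup Bool) (commWord k)) ∧
    Function.Injective (zpowersHom (FreeGroup (Fin n)) u'⁻¹) ∧
    ∃ e : Hgp k n u' ≃* Amal k n u',
      e (xg k n u') = Monoid.PushoutI.of (φ := amalMaps k n u') true (FreeGroup.of true) ∧
      e (bg k n u') = Monoid.PushoutI.of (φ := amalMaps k n u') true (FreeGroup.of false) ∧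
      ∀ m : Fin n,
        e (yg k n u' m) = Monoid.PushoutI.of (φ := amalMaps k n u') false (FreeGroup.of m) := by
  have hinj : ∀ i, Function.Injective (amalMaps k n u' i) := HgpAux.amal_inj k n u' hk hu
  refine ⟨⟨HgpAux.theBasis k n u' hinj, ?_, ?_⟩, hinj true, hinj false,
    HgpAux.eIso k n u', ?_, ?_, ?_⟩
  · rw [HgpAux.theBasis_apply]
    simp [HgpAux.jT]
  · rw [HgpAux.theBasis_apply]
    simp [HgpAux.jT]
  · exact HgpAux.fmap_of k n u' (Sum.inl true)
  · exact HgpAux.fmap_of k n u' (Sum.inl false)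
  · intro m
    exact HgpAux.fmap_of k n u' (Sum.inr m)
end

section
/- Let H̃ be the free group on {x,b}, F the free group on {y₁,…,yₙ}, u ∈ F nontrivial, and H = H̃ *_{[xᵏ,b]=u⁻¹} F the amalgamated product over infinite cyclic subgroups. Let r̃ ∈ H̃ and suppose that [xᵏ,b]ᵖ ∉ ((r̃)) for all p ≥ 1, where ((r̃)) is the normal closure of r̃ in H̃. Then the natural map H̃/((r̃)) → H/⟨⟨r̃⟩⟩ is injective, where ⟨⟨r̃⟩⟩ is the normal closure of r̃ in H. -/
set_option linter.unusedSectionVars false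
section TorsionFree


namespace Case1Aux

variable {α : Type*} [DecidableEq α]

/-- Two adjacent letters that do not cancel. -/
def Rel (a b : α × Bool) : Prop := a.1 ≠ b.1 ∨ a.2 = b.2

/-- A word is reduced iff no two adjacent letters cancel. -/
def IsRed (L : List (α × Bool)) : Prop := List.Chain' Rel L

lemma not_rel_self_not (x : α) (b : Bool) : ¬ Rel (x, b) (x, !b) := by
  simp [Rel]

lemma reduce_isRed (L : List (α × Bool)) : IsRed (FreeGroup.reduce L) := by
  induction L with
  | nil => simp [IsRed, List.Chain']
  | cons hd tl ih =>
    rw [FreeGroup.reduce.cons]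
    rcases h : FreeGroup.reduce tl with _ | ⟨hd2, tl2⟩
    · simp [IsRed, List.Chain']
    · rw [h] at ih
      show IsRed (if hd.1 = hd2.1 ∧ hd.2 = !hd2.2 then tl2 else hd :: hd2 :: tl2)
      by_cases hc : hd.1 = hd2.1 ∧ hd.2 = !hd2.2
      · rw [if_pos hc]
        exact ih.tail
      · rw [if_neg hc]
        refine List.isChain_cons_cons.2 ⟨?_, ih⟩
        by_cases h1 : hd.1 = hd2.1
        · right
          have h2 := not_and.mp hc h1
          revert h2; cases hd.2 <;> cases hd2.2 <;> simp
        · left; exact h1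

lemma isRed_no_step {L L' : List (α × Bool)} (h : IsRed L) : ¬ FreeGroup.Red.Step L L' := by
  intro hs
  cases hs with
  | @not L₁ L₂ x b =>
    have := (List.isChain_append_cons_cons.1 h).2.1
    exact not_rel_self_not x b this

lemma IsRed.reduce_eq {L : List (α × Bool)} (h : IsRed L) : FreeGroup.reduce L = L := by
  have hred : FreeGroup.Red L (FreeGroup.reduce L) := FreeGroup.reduce.red
  rcases Relation.ReflTransGen.cases_head hred with heq | ⟨c, hstep, _⟩
  · exact heq.symm
  · exact absurd hstep (isRed_no_step h)

lemma IsRed.mk_ne_one {L : List (α × Bool)} (h : IsRed L) (hL : L ≠ []) :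
    FreeGroup.mk L ≠ 1 := by
  intro h1
  have h2 : (FreeGroup.mk L).toWord = [] := by rw [h1]; exact FreeGroup.toWord_one
  rw [FreeGroup.toWord_mk, h.reduce_eq] at h2
  exact hL h2

lemma toWord_isRed (w : FreeGroup α) : IsRed w.toWord := by
  rw [← FreeGroup.reduce_toWord]; exact reduce_isRed _

lemma chain_flatten (a : α × Bool) (t : List (α × Bool)) (hL : IsRed (a :: t))
    (hcyc : Rel ((a :: t).getLast (List.cons_ne_nil a t)) a) (m : ℕ) :
    IsRed (List.flatten (List.replicate m (a :: t))) := by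
  induction m with
  | zero => simp [IsRed, List.Chain']
  | succ p ihp =>
    rw [List.replicate_succ, List.flatten_cons]
    refine List.IsChain.append hL ihp ?_
    intro x hx y hy
    have hx' : x = (a :: t).getLast (List.cons_ne_nil a t) := by
      rw [List.getLast?_eq_getLast (List.cons_ne_nil a t)] at hx
      exact (Option.mem_some_iff.mp hx).symm
    cases p with
    | zero => simp at hy
    | succ q =>
      rw [List.replicate_succ, List.flatten_cons] at hy
      have hy' : y = a := (by simpa using hy : a = y).symm
      rw [hx', hy']
      exact hcyc

/-- Free groups are torsion-free. -/
lemma pow_ne_one (w : FreeGroup α) (hw : w ≠ 1) : ∀ m : ℕ, 1 ≤ m → w ^ m ≠ 1 := by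
  suffices H : ∀ (N : ℕ) (w : FreeGroup α), w.toWord.length ≤ N → w ≠ 1 →
      ∀ m : ℕ, 1 ≤ m → w ^ m ≠ 1 from H _ w le_rfl hw
  intro N
  induction N with
  | zero =>
    intro w hlen hw m hm
    exact absurd (FreeGroup.toWord_eq_nil_iff.1 (List.eq_nil_of_length_eq_zero
      (Nat.le_antisymm hlen (Nat.zero_le _)))) hw
  | succ N ih =>
    intro w hlen hw m hm
    have hred : IsRed w.toWord := toWord_isRed w
    have hne : w.toWord ≠ [] := fun h => hw (FreeGroup.toWord_eq_nil_iff.1 h)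
    obtain ⟨a, t, hL⟩ : ∃ a t, w.toWord = a :: t := by
      rcases h : w.toWord with _ | ⟨a, t⟩
      · exact absurd h hne
      · exact ⟨a, t, rfl⟩
    rw [hL] at hred
    have hw' : w = FreeGroup.mk (a :: t) := by rw [← hL, FreeGroup.mk_toWord]
    by_cases hcyc : Rel ((a :: t).getLast (List.cons_ne_nil a t)) a
    · -- cyclically reduced case
      intro h1
      have h2 : FreeGroup.mk (List.flatten (List.replicate m (a :: t))) = 1 := by
        rw [← FreeGroup.pow_mk, ← hw']; exact h1
      obtain ⟨p, rfl⟩ : ∃ p, m = p + 1 := ⟨m - 1, by omega⟩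
      refine (chain_flatten a t hred hcyc (p + 1)).mk_ne_one ?_ h2
      rw [List.replicate_succ, List.flatten_cons]
      simp
    · -- conjugate of a shorter word
      set e := (a :: t).getLast (List.cons_ne_nil a t) with he
      have hrel : e.1 = a.1 ∧ e.2 ≠ a.2 := by
        rw [Rel, not_or] at hcyc
        exact ⟨not_not.mp hcyc.1, hcyc.2⟩
      have hea : e = (a.1, !a.2) := by
        obtain ⟨h1, h2⟩ := hrel
        have : e.2 = !a.2 := by revert h2; cases e.2 <;> cases a.2 <;> simp
        exact Prod.ext h1 this
      have htne : t ≠ [] := by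
        intro h
        subst h
        simp only [List.getLast_singleton] at he
        exact hrel.2 (by rw [he])
      obtain ⟨M, b, hMb⟩ := (List.eq_nil_or_concat t).resolve_left htne
      rw [List.concat_eq_append] at hMb
      subst hMb
      have heb : e = b := by
        rw [he]
        have : (a :: (M ++ [b])) = (a :: M) ++ [b] := by simp
        rw [List.getLast_congr _ (by simp) this, List.getLast_concat]
      set c := FreeGroup.mk [a] with hc
      set v := FreeGroup.mk M with hv
      have hcinv : c⁻¹ = FreeGroup.mk [e] := by
        rw [hc, FreeGroup.inv_mk, hea]
        simp [FreeGroup.invRev]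
      have hwv : w = c * v * c⁻¹ := by
        rw [hw', hcinv, hc, hv, FreeGroup.mul_mk, FreeGroup.mul_mk]
        congr 1
        simp [heb]
      have hMred : IsRed M := by
        have h1 : IsRed (M ++ [b]) := hred.tail
        exact (List.isChain_append.1 h1).1
      have hMne : M ≠ [] := by
        intro h
        subst h
        have h1 : Rel a b := (List.isChain_cons_cons.1 (by simpa [IsRed] using hred : List.Chain' Rel [a, b])).1
        rw [← heb] at h1
        rcases h1 with h1 | h1
        · exact h1 hrel.1.symm
        · exact hrel.2 h1.symm
      have hvne : v ≠ 1 := hMred.mk_ne_one hMne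
      have hvlen : v.toWord.length ≤ N := by
        have h1 : v.toWord = M := by rw [hv, FreeGroup.toWord_mk, hMred.reduce_eq]
        have h2 : (a :: (M ++ [b])).length ≤ N + 1 := by rw [← hL]; exact hlen
        simp only [List.length_cons, List.length_append, List.length_singleton] at h2
        rw [h1]; omega
      have hconj : ∀ p : ℕ, (c * v * c⁻¹) ^ p = c * v ^ p * c⁻¹ := by
        intro p
        induction p with
        | zero => simp
        | succ p ihp => rw [pow_succ, ihp, pow_succ]; group
      intro h1
      apply ih v hvlen hvne m hm
      have h2 : c * v ^ m * c⁻¹ = 1 := by rw [← hconj, ← hwv]; exact h1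
      have h3 : v ^ m = c⁻¹ * 1 * c := by rw [← h2]; group
      rw [h3]; group

/-- Injectivity of `zpowersHom` at an element of infinite order. -/
lemma zpowersHom_injective {G : Type*} [Group G] (g : G)
    (hg : ∀ m : ℕ, 1 ≤ m → g ^ m ≠ 1) : Function.Injective (zpowersHom G g) := by
  intro x y h
  simp only [zpowersHom_apply] at h
  have hd : g ^ (Multiplicative.toAdd x - Multiplicative.toAdd y) = 1 := by
    rw [zpow_sub, h, mul_inv_cancel]
  set d := Multiplicative.toAdd x - Multiplicative.toAdd y with hdd
  rcases lt_trichotomy d 0 with hlt | heq | hgt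
  · exfalso
    apply hg (-d).toNat (by omega)
    rw [← zpow_natCast, Int.toNat_of_nonneg (by omega), zpow_neg, hd, inv_one]
  · have hxy : Multiplicative.toAdd x = Multiplicative.toAdd y := by omega
    exact Multiplicative.toAdd.injective hxy
  · exfalso
    apply hg d.toNat (by omega)
    rw [← zpow_natCast, Int.toNat_of_nonneg (by omega)]
    exact hd

end Case1Aux
end TorsionFree

/-- The factors of the quotient pushout: `H̃/N` and `F`. -/
def QFac (n : ℕ) (N : Subgroup (FreeGroup Bool)) [N.Normal] : Bool → Type := fun i =>
  match i with
  | true => FreeGroup Bool ⧸ N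
  | false => FreeGroup (Fin n)

instance (n : ℕ) (N : Subgroup (FreeGroup Bool)) [N.Normal] :
    (i : Bool) → Group (QFac n N i) := fun i =>
  match i with
  | true => inferInstanceAs (Group (FreeGroup Bool ⧸ N))
  | false => inferInstanceAs (Group (FreeGroup (Fin n)))

/-- The diagram for the quotient pushout. -/
def qMaps (k n : ℕ) (N : Subgroup (FreeGroup Bool)) [N.Normal] (u' : FreeGroup (Fin n)) :
    ∀ i : Bool, Multiplicative ℤ →* QFac n N i := fun i =>
  match i with
  | true => zpowersHom (FreeGroup Bool ⧸ N) (QuotientGroup.mk (commWord k))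
  | false => zpowersHom (FreeGroup (Fin n)) u'⁻¹

/-- Case 1 of Section 5.2: if `r̃ ∈ H̃` and `[xᵏ,b]ᵖ ∉ ((r̃))` for all `p ≥ 1` (normal closure
in `H̃`), then the natural map `H̃/((r̃)) → H/⟨⟨r̃⟩⟩` is injective: any element of `H̃` whose
image in `H` lies in the normal closure of `r̃` in `H` already lies in the normal closure of
`r̃` in `H̃`. -/
theorem case1_embedding (k n : ℕ) (hk : 1 ≤ k) (hn : 1 ≤ n)
    (u' : FreeGroup (Fin n)) (hu : u' ≠ 1)
    (r : FreeGroup Bool)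
    (hp : ∀ p : ℕ, 1 ≤ p → commWord k ^ p ∉ Subgroup.normalClosure {r}) :
    ∀ a : FreeGroup Bool,
      Monoid.PushoutI.of (φ := amalMaps k n u') true a ∈
        Subgroup.normalClosure {Monoid.PushoutI.of (φ := amalMaps k n u') true r} →
      a ∈ Subgroup.normalClosure {r} := by
  intro a ha
  set N := Subgroup.normalClosure {r} with hN
  haveI hNn : N.Normal := Subgroup.normalClosure_normal
  -- the map from the amalgam to the quotient pushout
  set f : ∀ i : Bool, Fac n i →* Monoid.PushoutI (qMaps k n N u') := fun i =>
    match i with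
    | true => (Monoid.PushoutI.of (φ := qMaps k n N u') true).comp (QuotientGroup.mk' N)
    | false => Monoid.PushoutI.of (φ := qMaps k n N u') false
    with hf
  have hcompat : ∀ i : Bool, (f i).comp (amalMaps k n u' i) =
      Monoid.PushoutI.base (qMaps k n N u') := by
    intro i
    cases i
    · exact Monoid.PushoutI.of_comp_eq_base false
    · refine MonoidHom.ext fun z => ?_
      show Monoid.PushoutI.of (φ := qMaps k n N u') true
          (QuotientGroup.mk' N (commWord k ^ Multiplicative.toAdd z)) = _
      have : QuotientGroup.mk' N (commWord k ^ Multiplicative.toAdd z) =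
          qMaps k n N u' true z := by
        simp only [qMaps, zpowersHom_apply, QuotientGroup.mk'_apply]
        exact (QuotientGroup.mk_zpow N _ _)
      rw [this, Monoid.PushoutI.of_apply_eq_base]
  set θ : Amal k n u' →* Monoid.PushoutI (qMaps k n N u') :=
    Monoid.PushoutI.lift f (Monoid.PushoutI.base (qMaps k n N u')) hcompat with hθ
  have hinj : ∀ i : Bool, Function.Injective (qMaps k n N u' i) := by
    intro i
    cases i
    · exact Case1Aux.zpowersHom_injective _ (Case1Aux.pow_ne_one u'⁻¹ (inv_ne_one.mpr hu))
    · refine Case1Aux.zpowersHom_injective _ ?_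
      intro m hm h1
      have : ((commWord k ^ m : FreeGroup Bool) : FreeGroup Bool ⧸ N) = 1 := by
        rw [QuotientGroup.mk_pow]; exact h1
      exact hp m hm ((QuotientGroup.eq_one_iff _).mp this)
  have hθr : θ (Monoid.PushoutI.of (φ := amalMaps k n u') true r) = 1 := by
    rw [hθ]; erw [Monoid.PushoutI.lift_of]
    show Monoid.PushoutI.of (φ := qMaps k n N u') true (QuotientGroup.mk' N r) = 1
    have : QuotientGroup.mk' N r = 1 :=
      (QuotientGroup.eq_one_iff r).mpr (Subgroup.subset_normalClosure rfl)
    erw [this, map_one]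
  have hker : Subgroup.normalClosure {Monoid.PushoutI.of (φ := amalMaps k n u') true r} ≤
      θ.ker := by
    apply Subgroup.normalClosure_le_normal
    intro x hx
    rw [Set.mem_singleton_iff] at hx
    subst hx
    exact hθr
  have hθa : θ (Monoid.PushoutI.of (φ := amalMaps k n u') true a) = 1 := hker ha
  rw [hθ] at hθa; erw [Monoid.PushoutI.lift_of] at hθa
  have hq : QuotientGroup.mk' N a = 1 := by
    apply Monoid.PushoutI.of_injective hinj true
    erw [map_one]
    exact hθa
  exact (QuotientGroup.eq_one_iff a).mp hq
end

section
/- Let H̃ be the free group on {x,b}, F the free group on {y₁,…,yₙ}, u ∈ F nontrivial, H = H̃ *_{[xᵏ,b]=u⁻¹} F, and r̃ ∈ H̃. If p ≥ 1 is minimal with [xᵏ,b]ᵖ ∈ ((r̃)) (normal closure in H̃), then H/⟨⟨r̃⟩⟩ is isomorphic to the amalgamated product H̃/((r̃)) *_{[xᵏ,b]=u⁻¹} ⟨y₁,…,yₙ | uᵖ⟩, and in particular the natural map H̃/((r̃)) → H/⟨⟨r̃⟩⟩ is injective. -/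
/-! Setup: `H̃` is the free group on `{x, b}` (modelled as `FreeGroup Bool`, `true ↦ x`,
`false ↦ b`), `F` is the free group on `{y₁, …, yₙ}`, and
`H = H̃ *_{[xᵏ,b] = u⁻¹} F` is the amalgamated product over infinite cyclic subgroups,
realised as the pushout of the two maps `ℤ → H̃`, `ℤ → F` sending a generator of `ℤ` to
`[xᵏ,b]` and `u⁻¹` respectively. -/

namespace Case2Aux

/-- Noncommutative formal power series over `ℤ` in `n` variables, as coefficient functions
on words. -/
def M (n : ℕ) : Type := List (Fin n) → ℤ

namespace M

variable {n : ℕ}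

instance : One (M n) := ⟨fun w => if w = [] then 1 else 0⟩

instance : Mul (M n) :=
  ⟨fun f g w => ∑ j ∈ Finset.range (w.length + 1), f (w.take j) * g (w.drop j)⟩

lemma one_apply (w : List (Fin n)) : (1 : M n) w = if w = [] then 1 else 0 := rfl

@[simp] lemma one_nil : (1 : M n) [] = 1 := rfl

@[simp] lemma one_cons (a : Fin n) (w : List (Fin n)) : (1 : M n) (a :: w) = 0 := rfl

lemma mul_apply (f g : M n) (w : List (Fin n)) :
    (f * g) w = ∑ j ∈ Finset.range (w.length + 1), f (w.take j) * g (w.drop j) := rfl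

@[simp] lemma mul_nil (f g : M n) : (f * g) [] = f [] * g [] := by
  simp [mul_apply]

/-- Left shift of a series by a letter. -/
def D (a : Fin n) (f : M n) : M n := fun w => f (a :: w)

/-- Interpret a coefficient function as an element of `M n`. -/
def oF (f : List (Fin n) → ℤ) : M n := f

@[simp] lemma oF_apply (f : List (Fin n) → ℤ) (w : List (Fin n)) : oF f w = f w := rfl

lemma mul_cons (f g : M n) (a : Fin n) (w : List (Fin n)) :
    (f * g) (a :: w) = f [] * g (a :: w) + (D a f * g) w := by
  rw [mul_apply, mul_apply]
  simp only [List.length_cons]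
  rw [Finset.sum_range_succ' (fun j => f ((a::w).take j) * g ((a::w).drop j)) (w.length + 1)]
  simp only [List.take_succ_cons, List.drop_succ_cons, List.take_zero, List.drop_zero]
  rw [add_comm]
  rfl

lemma D_one (a : Fin n) : D a (1 : M n) = oF (n := n) (fun _ => 0) := by
  funext w; rfl

lemma zero_fun_mul (g : M n) (w : List (Fin n)) : (oF (n := n) (fun _ => 0) * g) w = 0 := by
  simp [mul_apply]

lemma add_fun_mul (f₁ f₂ g : M n) (w : List (Fin n)) :
    (oF (fun w' => f₁ w' + f₂ w') * g) w = (f₁ * g) w + (f₂ * g) w := by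
  simp [mul_apply, add_mul, Finset.sum_add_distrib]

lemma smul_fun_mul (c : ℤ) (f g : M n) (w : List (Fin n)) :
    (oF (fun w' => c * f w') * g) w = c * (f * g) w := by
  simp [mul_apply, Finset.mul_sum, mul_assoc]

protected lemma mul_one (f : M n) : f * 1 = f := by
  funext w
  induction w generalizing f with
  | nil => simp
  | cons a w ih => rw [mul_cons, ih (D a f)]; simp [D]

protected lemma one_mul (f : M n) : 1 * f = f := by
  funext w
  cases w with
  | nil => simp
  | cons a w => rw [mul_cons, D_one]; rw [zero_fun_mul]; simp

lemma D_mul (a : Fin n) (f g : M n) :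
    D a (f * g) = oF (fun w => f [] * (D a g) w + (D a f * g) w) := by
  funext w; exact mul_cons f g a w

protected lemma mul_assoc (f g h : M n) : f * g * h = f * (g * h) := by
  funext w
  induction w generalizing f g h with
  | nil => simp [mul_assoc]
  | cons a w ih =>
    rw [mul_cons, mul_cons, D_mul]
    have : (oF (fun w' => f [] * D a g w' + (D a f * g) w') * h) w
        = f [] * (D a g * h) w + (D a f * g * h) w := by
      rw [show oF (fun w' => f [] * D a g w' + (D a f * g) w') = oF (fun w' => oF (fun w'' => f [] * D a g w'') w' + (D a f * g) w') from rfl,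
        add_fun_mul, smul_fun_mul]
    rw [this, ih (D a f) g h, mul_nil, mul_cons g h a w]
    ring

instance : Monoid (M n) where
  mul_assoc := M.mul_assoc
  one_mul := M.one_mul
  mul_one := M.mul_one



/-- The series `1 + Xₐ`. -/
def gen (a : Fin n) : M n := fun w => if w = [] ∨ w = [a] then 1 else 0

/-- The series `(1 + Xₐ)⁻¹ = 1 - Xₐ + Xₐ² - ⋯`. -/
def geo (a : Fin n) : M n :=
  fun w => if w = List.replicate w.length a then (-1) ^ w.length else 0

@[simp] lemma gen_nil (a : Fin n) : gen a [] = 1 := rfl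

@[simp] lemma geo_nil (a : Fin n) : geo a [] = 1 := rfl

lemma gen_single (a b : Fin n) : gen a [b] = if b = a then 1 else 0 := by
  simp only [gen, List.cons.injEq, and_true]
  simp [eq_comm]

lemma geo_single (a b : Fin n) : geo a [b] = if b = a then -1 else 0 := by
  simp only [geo, List.length_cons, List.length_nil, List.replicate, List.cons.injEq, and_true]
  simp [eq_comm]

lemma D_gen_self (a : Fin n) : D a (gen a) = 1 := by
  funext w
  simp only [D, gen, one_apply, List.cons.injEq]
  cases w <;> simp

lemma D_gen_ne (a b : Fin n) (h : b ≠ a) : D b (gen a) = oF (n := n) (fun _ => 0) := by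
  funext w
  simp only [D, gen, oF_apply, List.cons.injEq]
  simp [h]

lemma cons_replicate_iff (a b : Fin n) (w : List (Fin n)) :
    (b :: w = List.replicate (b :: w).length a) ↔ (b = a ∧ w = List.replicate w.length a) := by
  simp [List.replicate_succ]

lemma D_geo_self (a : Fin n) : D a (geo a) = oF (fun w => (-1) * geo a w) := by
  funext w
  simp only [D, geo, oF_apply]
  rw [if_congr (cons_replicate_iff a a w) rfl rfl]
  simp [pow_succ, mul_comm]

lemma D_geo_ne (a b : Fin n) (h : b ≠ a) : D b (geo a) = oF (n := n) (fun _ => 0) := by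
  funext w
  simp only [D, geo, oF_apply]
  rw [if_congr (cons_replicate_iff a b w) rfl rfl]
  simp [h]

lemma gen_mul_geo (a : Fin n) : gen a * geo a = 1 := by
  funext w
  cases w with
  | nil => simp
  | cons b w =>
    rw [mul_cons, one_cons]
    by_cases hb : b = a
    · subst hb
      rw [D_gen_self, one_mul]
      have h1 : geo b (b :: w) = -1 * geo b w := by
        have := congrFun (D_geo_self b) w
        simpa [D] using this
      simp [gen, h1]
    · rw [D_gen_ne a b hb, zero_fun_mul]
      have : geo a (b :: w) = 0 := by
        have := congrFun (D_geo_ne a b hb) w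
        simpa [D] using this
      simp [gen, this]

lemma geo_mul_gen (a : Fin n) : geo a * gen a = 1 := by
  funext w
  induction w with
  | nil => simp
  | cons b w ih =>
    rw [mul_cons, one_cons, geo_nil, one_mul]
    by_cases hb : b = a
    · subst hb
      rw [D_geo_self]
      have h2 : (oF (fun w' => (-1) * geo b w') * gen b) w = (-1) * (geo b * gen b) w :=
        smul_fun_mul (-1) (geo b) (gen b) w
      rw [h2, ih]
      cases w with
      | nil => simp [gen]
      | cons c w' => simp [gen, one_apply]
    · rw [D_geo_ne a b hb, zero_fun_mul]
      simp [gen, hb]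

/-- The unit `1 + Xₐ` of `M n`. -/
def unitGen (a : Fin n) : (M n)ˣ := ⟨gen a, geo a, gen_mul_geo a, geo_mul_gen a⟩

/-- The Magnus homomorphism from the free group. -/
def magnus (n : ℕ) : FreeGroup (Fin n) →* (M n)ˣ := FreeGroup.lift fun a => unitGen a

@[simp] lemma magnus_of (a : Fin n) : magnus n (FreeGroup.of a) = unitGen a :=
  FreeGroup.lift_apply_of

/-- The subgroup of units whose value and inverse have constant term `1`. -/
def UC (n : ℕ) : Subgroup (M n)ˣ where
  carrier := {v | (v : M n) [] = 1 ∧ ((↑v⁻¹ : M n)) [] = 1}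
  one_mem' := by simp
  mul_mem' := by
    rintro v w ⟨hv1, hv2⟩ ⟨hw1, hw2⟩
    constructor
    · rw [Units.val_mul, mul_nil, hv1, hw1, mul_one]
    · rw [mul_inv_rev, Units.val_mul, mul_nil, hv2, hw2, mul_one]
  inv_mem' := by
    rintro v ⟨hv1, hv2⟩
    exact ⟨hv2, by simpa using hv1⟩

lemma unitGen_mem_UC (a : Fin n) : unitGen a ∈ UC n := by
  constructor
  · simp [unitGen]
  · simp [unitGen]

lemma magnus_mem_UC (u : FreeGroup (Fin n)) : magnus n u ∈ UC n := by
  induction u using FreeGroup.induction_on with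
  | C1 => rw [map_one]; exact one_mem _
  | of a => rw [magnus_of]
            exact unitGen_mem_UC a
  | inv_of a h => rw [map_inv]; exact inv_mem h
  | mul x y hx hy => rw [map_mul]; exact mul_mem hx hy

@[simp] lemma magnus_nil (u : FreeGroup (Fin n)) : ((magnus n u : (M n)ˣ) : M n) [] = 1 :=
  (magnus_mem_UC u).1

/-- Support condition: supported on powers of the letter `a`. -/
def SP (a : Fin n) (f : M n) : Prop := ∀ w : List (Fin n), ¬(∀ x ∈ w, x = a) → f w = 0

lemma SP.mul {a : Fin n} {f g : M n} (hf : SP a f) (hg : SP a g) : SP a (f * g) := by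
  intro w hw
  rw [mul_apply]
  refine Finset.sum_eq_zero fun j _ => ?_
  by_cases h1 : ∀ x ∈ w.take j, x = a
  · by_cases h2 : ∀ x ∈ w.drop j, x = a
    · exfalso
      refine hw fun x hx => ?_
      have hx' : x ∈ w.take j ++ w.drop j := by rwa [List.take_append_drop]
      rcases List.mem_append.1 hx' with h | h
      · exact h1 x h
      · exact h2 x h
    · rw [hg _ h2, mul_zero]
  · rw [hf _ h1, zero_mul]

lemma SP_gen (a : Fin n) : SP a (gen a) := by
  intro w hw
  have h1 : w ≠ [] := by rintro rfl; exact hw (by simp)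
  have h2 : w ≠ [a] := by rintro rfl; exact hw (by simp)
  simp [gen, h1, h2]

lemma SP_geo (a : Fin n) : SP a (geo a) := by
  intro w hw
  have : w ≠ List.replicate w.length a := by
    intro h
    exact hw fun x hx => List.eq_of_mem_replicate (h ▸ hx)
  simp [geo, this]

/-- The subgroup of units supported on powers of `a`. -/
def DU (a : Fin n) : Subgroup (M n)ˣ where
  carrier := {v | SP a (v : M n) ∧ SP a ((↑v⁻¹ : M n))}
  one_mem' := by
    constructor <;>
    · intro w hw
      have hne : w ≠ [] := by rintro rfl; exact hw (by simp)
      simp [one_apply, hne]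
  mul_mem' := by
    rintro v w ⟨hv1, hv2⟩ ⟨hw1, hw2⟩
    refine ⟨?_, ?_⟩
    · rw [Units.val_mul]; exact hv1.mul hw1
    · rw [mul_inv_rev, Units.val_mul]; exact hw2.mul hv2
  inv_mem' := by
    rintro v ⟨hv1, hv2⟩
    exact ⟨hv2, by simpa using hv1⟩

lemma unitGen_mem_DU (a : Fin n) : unitGen a ∈ DU a :=
  ⟨SP_gen a, SP_geo a⟩

lemma zpow_unitGen_mem_DU (a : Fin n) (e : ℤ) : unitGen a ^ e ∈ DU a :=
  zpow_mem (unitGen_mem_DU a) e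

lemma zpow_unitGen_mem_UC (a : Fin n) (e : ℤ) : unitGen a ^ e ∈ UC n :=
  zpow_mem (unitGen_mem_UC a) e

lemma coeff_single_mul (f g : M n) (hf : f [] = 1) (hg : g [] = 1) (b : Fin n) :
    (f * g) [b] = f [b] + g [b] := by
  rw [mul_cons, hf, one_mul]
  have : (D b f * g) [] = f [b] * g [] := mul_nil _ _
  rw [this, hg, mul_one, add_comm]

lemma coeff_single_zpow (a : Fin n) (e : ℤ) :
    ((unitGen a ^ e : (M n)ˣ) : M n) [a] = e := by
  induction e using Int.induction_on with
  | zero => simp [one_apply]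
  | succ e ih =>
    rw [zpow_add_one, Units.val_mul,
      coeff_single_mul _ _ (zpow_unitGen_mem_UC a e).1 (unitGen_mem_UC a).1, ih]
    simp [unitGen, gen_single]

  | pred e ih =>
    rw [zpow_sub_one, Units.val_mul,
      coeff_single_mul _ _ (zpow_unitGen_mem_UC a (-e)).1 (by simp [unitGen] : ((↑(unitGen a)⁻¹ : M n)) [] = 1), ih]
    have : ((↑(unitGen a)⁻¹ : M n)) [a] = -1 := by simp [unitGen, geo_single]
    rw [this]
    ring


/-! ### Blocks and the Magnus coefficient computation -/

/-- The unit associated to a block `(a, e)`, namely `(1+Xₐ)^e`. -/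
def Ublock (b : Fin n × ℤ) : (M n)ˣ := unitGen b.1 ^ b.2

/-- Product of the block units. -/
def blockGrp (B : List (Fin n × ℤ)) : (M n)ˣ := (B.map Ublock).prod

/-- Product of the blocks in the free group. -/
def blockFree (B : List (Fin n × ℤ)) : FreeGroup (Fin n) :=
  (B.map fun b => FreeGroup.of b.1 ^ b.2).prod

@[simp] lemma blockFree_nil : blockFree ([] : List (Fin n × ℤ)) = 1 := rfl

lemma blockFree_cons (b : Fin n × ℤ) (B : List (Fin n × ℤ)) :
    blockFree (b :: B) = FreeGroup.of b.1 ^ b.2 * blockFree B := by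
  simp [blockFree]

lemma magnus_blockFree (B : List (Fin n × ℤ)) : magnus n (blockFree B) = blockGrp B := by
  rw [blockFree, blockGrp, map_list_prod, List.map_map]
  congr 1
  refine List.map_congr_left fun b _ => ?_
  simp [Function.comp, Ublock, map_zpow]

lemma chain_take_false (w : List (Fin n)) (hw : w.Chain' (· ≠ ·)) (j : ℕ) (hj : 2 ≤ j)
    (hjw : j ≤ w.length) (a : Fin n) (hall : ∀ x ∈ w.take j, x = a) : False := by
  cases w with
  | nil => simp at hjw; omega
  | cons b w1 =>
    cases w1 with
    | nil => simp at hjw; omega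
    | cons c t =>
      obtain ⟨j', rfl⟩ : ∃ j', j = j' + 2 := ⟨j - 2, by omega⟩
      have hmem : b ∈ (b :: c :: t).take (j' + 2) := by simp [List.take_succ_cons]
      have hmem2 : c ∈ (b :: c :: t).take (j' + 2) := by simp [List.take_succ_cons]
      have hbc : b ≠ c := (List.isChain_cons_cons.1 hw).1
      exact hbc ((hall b hmem).trans (hall c hmem2).symm)

lemma Ublock_val_nil (b : Fin n × ℤ) : ((Ublock b : (M n)ˣ) : M n) [] = 1 :=
  (zpow_unitGen_mem_UC b.1 b.2).1

lemma Ublock_val_single (b : Fin n × ℤ) : ((Ublock b : (M n)ˣ) : M n) [b.1] = b.2 :=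
  coeff_single_zpow b.1 b.2

lemma Ublock_SP (b : Fin n × ℤ) : SP b.1 ((Ublock b : (M n)ˣ) : M n) :=
  (zpow_unitGen_mem_DU b.1 b.2).1

lemma blockGrp_vanish : ∀ (B : List (Fin n × ℤ)) (w : List (Fin n)),
    w.Chain' (· ≠ ·) → B.length < w.length → ((blockGrp B : (M n)ˣ) : M n) w = 0 := by
  intro B
  induction B with
  | nil =>
    intro w _ hlen
    have : w ≠ [] := by rintro rfl; simp at hlen
    simp [blockGrp, one_apply, this]
  | cons b B ih =>
    intro w hw hlen
    have hlen' : B.length + 1 < w.length := by simpa using hlen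
    have hmul : blockGrp (b :: B) = Ublock b * blockGrp B := by simp [blockGrp]
    rw [hmul, Units.val_mul, mul_apply]
    refine Finset.sum_eq_zero fun j hj => ?_
    have hjle : j ≤ w.length := by
      have := Finset.mem_range.1 hj; omega
    rcases Nat.lt_or_ge j 2 with hj2 | hj2
    · interval_cases j
      · rw [List.drop_zero, ih w hw (by omega)]
        simp
      · rw [ih (w.drop 1) (by rw [List.drop_one]; exact hw.tail)
          (by rw [List.length_drop]; omega)]
        simp
    · rw [Ublock_SP b (w.take j) (fun hall => chain_take_false w hw j hj2 hjle b.1 hall),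
        zero_mul]

lemma blockGrp_coeff : ∀ B : List (Fin n × ℤ), List.Chain' (fun p q => p.1 ≠ q.1) B →
    ((blockGrp B : (M n)ˣ) : M n) (B.map Prod.fst) = (B.map fun b => b.2).prod := by
  intro B
  induction B with
  | nil => simp [blockGrp, one_apply]
  | cons b B ih =>
    intro hchain
    have hmul : blockGrp (b :: B) = Ublock b * blockGrp B := by simp [blockGrp]
    have hwchain : List.Chain' (· ≠ ·) ((b :: B).map Prod.fst) :=
      (List.isChain_map Prod.fst).2 hchain
    rw [hmul, Units.val_mul, mul_apply]
    have hlen : ((b :: B).map Prod.fst).length = B.length + 1 := by simp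
    rw [List.map_cons]
    have key : ∀ j ∈ Finset.range (((b.1 :: B.map Prod.fst)).length + 1), j ≠ 1 →
        ((Ublock b : (M n)ˣ) : M n) ((b.1 :: B.map Prod.fst).take j) *
          ((blockGrp B : (M n)ˣ) : M n) ((b.1 :: B.map Prod.fst).drop j) = 0 := by
      intro j hj hj1
      have hjle : j ≤ (b.1 :: B.map Prod.fst).length := by
        have := Finset.mem_range.1 hj; omega
      rcases Nat.lt_or_ge j 2 with hj2 | hj2
      · have hj0 : j = 0 := by omega
        subst hj0
        rw [List.drop_zero, List.take_zero, blockGrp_vanish B (b.1 :: B.map Prod.fst)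
          (by simpa using hwchain) (by simp)]
        simp
      · rw [Ublock_SP b ((b.1 :: B.map Prod.fst).take j)
          (fun hall => chain_take_false _ (by simpa using hwchain) j hj2 hjle b.1 hall),
          zero_mul]
    rw [Finset.sum_eq_single_of_mem 1 (by simp) key]
    have h1 : (b.1 :: B.map Prod.fst).take 1 = [b.1] := rfl
    have h2 : (b.1 :: B.map Prod.fst).drop 1 = B.map Prod.fst := rfl
    rw [h1, h2, Ublock_val_single, ih hchain.tail]
    simp

/-! ### Reduced words decompose into blocks -/

/-- The sign of a letter. -/
def sgn (s : Bool) : ℤ := if s then 1 else -1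

lemma sgn_ne_zero (s : Bool) : sgn s ≠ 0 := by cases s <;> simp [sgn]

lemma mk_single (x : Fin n × Bool) : FreeGroup.mk [x] = FreeGroup.of x.1 ^ sgn x.2 := by
  obtain ⟨a, s⟩ := x
  cases s
  · have : FreeGroup.mk [(a, false)] = (FreeGroup.of a)⁻¹ := by
      rw [show FreeGroup.of a = FreeGroup.mk [(a, true)] from rfl, FreeGroup.inv_mk]
      rfl
    simp [sgn, this]
  · simp [sgn]
    rfl

lemma exists_blocks : ∀ (t : List (Fin n × Bool)) (x : Fin n × Bool),
    List.Chain' (fun p q : Fin n × Bool => p.1 = q.1 → p.2 = q.2) (x :: t) →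
    ∃ (e : ℤ) (B : List (Fin n × ℤ)),
      blockFree ((x.1, e) :: B) = FreeGroup.mk (x :: t) ∧
      List.Chain' (fun p q : Fin n × ℤ => p.1 ≠ q.1) ((x.1, e) :: B) ∧
      (∀ b ∈ ((x.1, e) :: B), b.2 ≠ 0) ∧
      (if x.2 then 0 < e else e < 0) := by
  intro t
  induction t with
  | nil =>
    intro x _
    refine ⟨sgn x.2, [], ?_, List.isChain_singleton _, ?_, ?_⟩
    · rw [blockFree_cons, blockFree_nil, mul_one, mk_single]
    · intro b hb
      simp at hb
      subst hb
      exact sgn_ne_zero x.2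
    · cases hx : x.2 <;> simp [sgn]
  | cons y t' ih =>
    intro x hchain
    have hxy := (List.isChain_cons_cons.1 hchain).1
    have htail : List.Chain' _ (y :: t') := (List.isChain_cons_cons.1 hchain).2
    obtain ⟨e', B', hprod, hchain', hnz, hsign⟩ := ih y htail
    have hmk : FreeGroup.mk (x :: y :: t') = FreeGroup.mk [x] * FreeGroup.mk (y :: t') := by
      rw [FreeGroup.mul_mk]
      rfl
    by_cases h1 : x.1 = y.1
    · have h2 : x.2 = y.2 := hxy h1
      refine ⟨e' + sgn x.2, B', ?_, ?_, ?_, ?_⟩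
      · rw [blockFree_cons, hmk, mk_single, ← hprod, blockFree_cons, h1, ← mul_assoc,
          ← zpow_add, add_comm]
      · rw [show (x.1, e' + sgn x.2) = (y.1, e' + sgn x.2) from by rw [h1]]
        cases B' with
        | nil => exact List.isChain_singleton _
        | cons c r =>
          exact List.isChain_cons_cons.2 ⟨(List.isChain_cons_cons.1 hchain').1, (List.isChain_cons_cons.1 hchain').2⟩
      · rw [← h2] at hsign
        intro b hb
        rcases List.mem_cons.1 hb with rfl | hb
        · cases hx : x.2 <;> rw [hx] at hsign <;> simp [sgn] at hsign ⊢ <;> omega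
        · exact hnz b (List.mem_cons_of_mem _ hb)
      · rw [← h2] at hsign
        cases hx : x.2 <;> rw [hx] at hsign <;> simp [sgn] at hsign ⊢ <;> omega
    · refine ⟨sgn x.2, (y.1, e') :: B', ?_, ?_, ?_, ?_⟩
      · rw [blockFree_cons, hmk, ← hprod, mk_single]
      · exact List.isChain_cons_cons.2 ⟨h1, hchain'⟩
      · intro b hb
        rcases List.mem_cons.1 hb with rfl | hb
        · exact sgn_ne_zero x.2
        · exact hnz b hb
      · cases hx : x.2 <;> simp [sgn]

lemma reduced_chain : ∀ l : List (Fin n × Bool), FreeGroup.reduce l = l →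
    List.Chain' (fun p q : Fin n × Bool => p.1 = q.1 → p.2 = q.2) l := by
  intro l
  induction l with
  | nil => intro _; exact List.isChain_nil
  | cons x t ih =>
    intro h
    rw [FreeGroup.reduce.cons] at h
    cases ht : FreeGroup.reduce t with
    | nil =>
      rw [ht] at h
      simp at h
      subst h
      exact List.isChain_singleton _
    | cons hd tl =>
      rw [ht] at h
      replace h : (if x.1 = hd.1 ∧ x.2 = !hd.2 then tl else x :: hd :: tl) = x :: t := h
      by_cases hc : x.1 = hd.1 ∧ x.2 = !hd.2
      · rw [if_pos hc] at h
        exfalso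
        have hlen : (FreeGroup.reduce t).length ≤ t.length :=
          FreeGroup.Red.length_le (FreeGroup.reduce.red)
        rw [ht] at hlen
        have : tl.length = t.length + 1 := by rw [h]; simp
        simp at hlen
        omega
      · rw [if_neg hc] at h
        have h2 : t = hd :: tl := by
          simp only [List.cons.injEq] at h
          exact h.2.symm
        have hred : FreeGroup.reduce t = t := by rw [ht, ← h2]
        have hcht := ih hred
        rw [h2] at hcht ⊢
        refine List.isChain_cons_cons.2 ⟨?_, hcht⟩
        intro hfst
        by_contra hne
        exact hc ⟨hfst, by
          cases hx : x.2 <;> cases hh : hd.2 <;> simp_all⟩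

/-- Key nonvanishing property of the Magnus homomorphism. -/
lemma magnus_exists_coeff (u : FreeGroup (Fin n)) (hu : u ≠ 1) :
    ∃ w : List (Fin n), w ≠ [] ∧ ((magnus n u : (M n)ˣ) : M n) w ≠ 0 := by
  have hl : u.toWord ≠ [] := fun h => hu (FreeGroup.toWord_eq_nil_iff.1 h)
  have hred := reduced_chain u.toWord (FreeGroup.reduce_toWord u)
  cases htw : u.toWord with
  | nil => exact absurd htw hl
  | cons x t =>
    rw [htw] at hred
    obtain ⟨e, B, hprod, hchain, hnz, -⟩ := exists_blocks t x hred
    refine ⟨x.1 :: B.map Prod.fst, by simp, ?_⟩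
    have hu' : u = blockFree ((x.1, e) :: B) := by
      rw [hprod, ← htw, FreeGroup.mk_toWord]
    rw [hu', magnus_blockFree]
    have hc := blockGrp_coeff ((x.1, e) :: B) hchain
    rw [List.map_cons] at hc
    rw [hc]
    refine List.prod_ne_zero fun h0 => ?_
    rcases List.mem_map.1 h0 with ⟨b, hb, hb2⟩
    exact hnz b hb hb2


/-! ### Minimal degree coefficient arguments -/

/-- `LowZero k f` means `f` has constant term 1 and vanishes in degrees `1,…,k-1`. -/
def LowZero (k : ℕ) (f : M n) : Prop :=
  f [] = 1 ∧ ∀ w : List (Fin n), w ≠ [] → w.length < k → f w = 0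

lemma take_ne_nil {w : List (Fin n)} {j : ℕ} (hj : 0 < j) (hw : w ≠ []) :
    w.take j ≠ [] := by
  intro h
  rcases List.take_eq_nil_iff.1 h with h1 | h1
  · omega
  · exact hw h1

lemma LowZero.mul {k : ℕ} {f g : M n} (hf : LowZero k f) (hg : LowZero k g) :
    LowZero k (f * g) := by
  refine ⟨by rw [mul_nil, hf.1, hg.1, mul_one], fun w hne hlen => ?_⟩
  rw [mul_apply]
  refine Finset.sum_eq_zero fun j hj => ?_
  rcases Nat.eq_zero_or_pos j with rfl | hj1
  · rw [List.take_zero, List.drop_zero, hf.1, one_mul]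
    exact hg.2 w hne hlen
  · rw [hf.2 (w.take j) (take_ne_nil hj1 hne) (by rw [List.length_take]; omega), zero_mul]

lemma LowZero.coeff_mul {k : ℕ} (hk : 1 ≤ k) {f g : M n} (hf : LowZero k f)
    (hg : LowZero k g) (w : List (Fin n)) (hlen : w.length = k) :
    (f * g) w = f w + g w := by
  rw [mul_apply]
  have hcong : ∀ j ∈ Finset.range (w.length + 1),
      f (w.take j) * g (w.drop j) =
        (if j = 0 then g w else 0) + (if j = w.length then f w else 0) := by
    intro j hj
    have hjle : j ≤ w.length := by have := Finset.mem_range.1 hj; omega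
    have hne : w ≠ [] := by intro h; rw [h] at hlen; simp at hlen; omega
    rcases Nat.eq_zero_or_pos j with rfl | hj1
    · rw [List.take_zero, List.drop_zero, hf.1, one_mul, if_pos rfl,
        if_neg (by omega), add_zero]
    · rcases Nat.lt_or_ge j w.length with hjlt | hjge
      · rw [hf.2 (w.take j) (take_ne_nil hj1 hne) (by rw [List.length_take]; omega), zero_mul,
          if_neg (by omega), if_neg (by omega), add_zero]
      · have hjw : j = w.length := by omega
        subst hjw
        rw [List.take_length, List.drop_length, hg.1, mul_one, if_neg (by omega), if_pos rfl,
          zero_add]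
  rw [Finset.sum_congr rfl hcong, Finset.sum_add_distrib, Finset.sum_ite_eq' (Finset.range
    (w.length + 1)) 0 (fun _ => g w), Finset.sum_ite_eq' (Finset.range (w.length + 1))
    w.length (fun _ => f w)]
  rw [if_pos (by simp), if_pos (by simp), add_comm]

lemma LowZero.mul_left_low {k : ℕ} {f : M n} (hf : LowZero k f) (x : M n)
    (w : List (Fin n)) (hlen : w.length < k) : (f * x) w = x w := by
  rw [mul_apply, Finset.sum_range_succ']
  have : ∀ j ∈ Finset.range w.length,
      f (w.take (j + 1)) * x (w.drop (j + 1)) = 0 := by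
    intro j hj
    have hne : w ≠ [] := by
      intro h; rw [h] at hj; simp at hj
    rw [hf.2 (w.take (j+1)) (take_ne_nil (by omega) hne) (by rw [List.length_take]; omega),
      zero_mul]
  rw [Finset.sum_eq_zero this, List.take_zero, List.drop_zero, hf.1, one_mul, zero_add]

lemma LowZero.mul_left_coeff {k : ℕ} (hk : 1 ≤ k) {f : M n} (hf : LowZero k f) (x : M n)
    (w : List (Fin n)) (hlen : w.length = k) : (f * x) w = x w + f w * x [] := by
  rw [mul_apply, Finset.sum_range_succ']
  have hne : w ≠ [] := by intro h; rw [h] at hlen; simp at hlen; omega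
  have hwpos : 0 < w.length := by omega
  have : ∀ j ∈ Finset.range w.length,
      f (w.take (j + 1)) * x (w.drop (j + 1)) =
        if j = w.length - 1 then f w * x [] else 0 := by
    intro j hj
    have hjlt : j < w.length := Finset.mem_range.1 hj
    rcases Nat.lt_or_ge (j+1) w.length with hlt | hge
    · rw [hf.2 (w.take (j+1)) (take_ne_nil (by omega) hne) (by rw [List.length_take]; omega),
        zero_mul, if_neg (by omega)]
    · have hj1 : j + 1 = w.length := by omega
      rw [hj1, List.take_length, List.drop_length, if_pos (by omega)]
  rw [Finset.sum_congr rfl this, Finset.sum_ite_eq' (Finset.range w.length) (w.length - 1)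
    (fun _ => f w * x []), if_pos (by simp [Finset.mem_range]; omega)]
  rw [List.take_zero, List.drop_zero, hf.1, one_mul, add_comm]

/-- The predicate `Kp k` for units. -/
def Kp (k : ℕ) (v : (M n)ˣ) : Prop := LowZero k ((v : (M n)ˣ) : M n)

lemma unit_nil_inv (v : (M n)ˣ) (h : (v : M n) [] = 1) : ((↑v⁻¹ : M n)) [] = 1 := by
  have h1 : ((v : M n) * (↑v⁻¹ : M n)) [] = 1 := by
    rw [← Units.val_mul, mul_inv_cancel, Units.val_one, one_nil]
  rw [mul_nil, h, one_mul] at h1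
  exact h1

lemma Kp.one (k : ℕ) : Kp k (1 : (M n)ˣ) := by
  refine ⟨rfl, fun w hw _ => ?_⟩
  rw [Units.val_one, one_apply, if_neg hw]

lemma Kp.mul {k : ℕ} {v₁ v₂ : (M n)ˣ} (h₁ : Kp k v₁) (h₂ : Kp k v₂) : Kp k (v₁ * v₂) := by
  rw [Kp, Units.val_mul]; exact LowZero.mul h₁ h₂

lemma Kp.coeff_mul {k : ℕ} (hk : 1 ≤ k) {v₁ v₂ : (M n)ˣ} (h₁ : Kp k v₁) (h₂ : Kp k v₂)
    (w : List (Fin n)) (hlen : w.length = k) :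
    ((v₁ * v₂ : (M n)ˣ) : M n) w = (v₁ : M n) w + (v₂ : M n) w := by
  rw [Units.val_mul]; exact LowZero.coeff_mul hk h₁ h₂ w hlen

lemma Kp.inv {k : ℕ} (hk : 1 ≤ k) {v : (M n)ˣ} (h : Kp k v) : Kp k v⁻¹ := by
  refine ⟨unit_nil_inv v h.1, fun w hne hlen => ?_⟩
  have h0 : ((v : M n) * (↑v⁻¹ : M n)) w = 0 := by
    rw [← Units.val_mul, mul_inv_cancel, Units.val_one, one_apply, if_neg hne]
  rw [h.mul_left_low _ w hlen] at h0
  exact h0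

lemma Kp.coeff_inv {k : ℕ} (hk : 1 ≤ k) {v : (M n)ˣ} (h : Kp k v)
    (w : List (Fin n)) (hlen : w.length = k) : ((↑v⁻¹ : M n)) w = -(v : M n) w := by
  have hne : w ≠ [] := by intro hx; rw [hx] at hlen; simp at hlen; omega
  have h0 : ((v : M n) * (↑v⁻¹ : M n)) w = 0 := by
    rw [← Units.val_mul, mul_inv_cancel, Units.val_one, one_apply, if_neg hne]
  rw [LowZero.coeff_mul hk h (Kp.inv hk h) w hlen] at h0
  linarith

lemma Kp.pow {k : ℕ} (hk : 1 ≤ k) {v : (M n)ˣ} (h : Kp k v) (m : ℕ) :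
    Kp k (v ^ m) ∧ ∀ w : List (Fin n), w.length = k →
      ((v ^ m : (M n)ˣ) : M n) w = (m : ℤ) * (v : M n) w := by
  induction m with
  | zero =>
    refine ⟨by rw [pow_zero]; exact Kp.one k, fun w hlen => ?_⟩
    have hne : w ≠ [] := by intro hx; rw [hx] at hlen; simp at hlen; omega
    rw [pow_zero, Units.val_one, one_apply, if_neg hne]
    simp
  | succ m ih =>
    refine ⟨by rw [pow_succ]; exact ih.1.mul h, fun w hlen => ?_⟩
    rw [pow_succ, Kp.coeff_mul hk ih.1 h w hlen, ih.2 w hlen]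
    push_cast
    ring

lemma Kp.conj {k : ℕ} (hk : 1 ≤ k) {v : (M n)ˣ} (h : Kp k v) (c : (M n)ˣ) :
    Kp k (c * v * c⁻¹) ∧ ∀ w : List (Fin n), w.length = k →
      ((c * v * c⁻¹ : (M n)ˣ) : M n) w = (v : M n) w := by
  have hcc : ((c : M n) * (↑c⁻¹ : M n)) = 1 := by
    rw [← Units.val_mul, mul_inv_cancel, Units.val_one]
  have hccnil : (c : M n) [] * ((↑c⁻¹ : M n)) [] = 1 := by
    have := congrFun hcc []
    rwa [mul_nil] at this
  have hval : ((c * v * c⁻¹ : (M n)ˣ) : M n) = (c : M n) * ((v : M n) * (↑c⁻¹ : M n)) := by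
    rw [Units.val_mul, Units.val_mul, mul_assoc]
  constructor
  · refine ⟨?_, fun w hne hlen => ?_⟩
    · rw [hval, mul_nil, mul_nil, h.1, one_mul, hccnil]
    · rw [hval, mul_apply]
      have : ∀ j ∈ Finset.range (w.length + 1),
          (c : M n) (w.take j) * ((v : M n) * (↑c⁻¹ : M n)) (w.drop j) =
          (c : M n) (w.take j) * ((↑c⁻¹ : M n)) (w.drop j) := by
        intro j hj
        rw [h.mul_left_low _ (w.drop j) (by rw [List.length_drop]; omega)]
      rw [Finset.sum_congr rfl this, ← mul_apply, hcc, one_apply, if_neg hne]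
  · intro w hlen
    have hne : w ≠ [] := by intro hx; rw [hx] at hlen; simp at hlen; omega
    rw [hval, mul_apply]
    have : ∀ j ∈ Finset.range (w.length + 1),
        (c : M n) (w.take j) * ((v : M n) * (↑c⁻¹ : M n)) (w.drop j) =
        (c : M n) (w.take j) * ((↑c⁻¹ : M n)) (w.drop j) +
          (if j = 0 then (c : M n) [] * ((v : M n) w * ((↑c⁻¹ : M n)) []) else 0) := by
      intro j hj
      have hjle : j ≤ w.length := by have := Finset.mem_range.1 hj; omega
      rcases Nat.eq_zero_or_pos j with rfl | hj1
      · rw [List.take_zero, List.drop_zero, if_pos rfl,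
          h.mul_left_coeff hk _ w hlen, mul_add]
      · rw [h.mul_left_low _ (w.drop j) (by rw [List.length_drop]; omega),
          if_neg (by omega), add_zero]
    rw [Finset.sum_congr rfl this, Finset.sum_add_distrib, ← mul_apply, hcc, one_apply,
      if_neg hne, Finset.sum_ite_eq' (Finset.range (w.length + 1)) 0
        (fun _ => (c : M n) [] * ((v : M n) w * ((↑c⁻¹ : M n)) [])), if_pos (by simp)]
    have hfin : (c : M n) [] * ((v : M n) w * ((↑c⁻¹ : M n)) []) = (v : M n) w := by
      rw [mul_comm ((v : M n) w), ← mul_assoc, hccnil, one_mul]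
    rw [zero_add, hfin]

/-- Key divisibility: if `u ≠ 1` and `u^t` lies in the normal closure of `u^p`
in the free group, then `p ∣ t`. -/
lemma key_dvd (u : FreeGroup (Fin n)) (hu : u ≠ 1) (p t : ℕ)
    (ht : u ^ t ∈ Subgroup.normalClosure {u ^ p}) : p ∣ t := by
  classical
  set g := magnus n u with hg
  obtain ⟨w₀, hw0ne, hw0⟩ := magnus_exists_coeff u hu
  have hex : ∃ m : ℕ, ∃ w : List (Fin n), w.length = m ∧ w ≠ [] ∧ (g : M n) w ≠ 0 :=
    ⟨w₀.length, w₀, rfl, hw0ne, hw0⟩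
  set k := Nat.find hex with hkdef
  obtain ⟨wk, hwk_len, hwk_ne, hwk⟩ := Nat.find_spec hex
  have hk1 : 1 ≤ k := by
    by_contra hcon
    have hk0 : k = 0 := by omega
    exact hwk_ne (List.length_eq_zero_iff.1 (by omega))
  have hKp : Kp k g := by
    refine ⟨magnus_nil u, fun w hne hlen => ?_⟩
    by_contra hne0
    exact Nat.find_min hex (m := w.length) hlen ⟨w, rfl, hne, hne0⟩
  -- push the membership through `magnus`
  have hmem : g ^ t ∈ Subgroup.normalClosure {g ^ p} := by
    haveI : ((Subgroup.normalClosure {g ^ p}).comap (magnus n)).Normal :=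
      Subgroup.Normal.comap Subgroup.normalClosure_normal (magnus n)
    have hle : Subgroup.normalClosure {u ^ p} ≤
        (Subgroup.normalClosure {g ^ p}).comap (magnus n) := by
      refine Subgroup.normalClosure_le_normal ?_
      rw [Set.singleton_subset_iff, SetLike.mem_coe, Subgroup.mem_comap, map_pow]
      exact Subgroup.subset_normalClosure (by simp [hg])
    have := hle ht
    rwa [Subgroup.mem_comap, map_pow] at this
  have hppow := (hKp.pow hk1 p)
  -- induction over the normal closure
  have hP : Kp k (g ^ t) ∧ ∃ lam : ℤ, ∀ w : List (Fin n), w.length = k →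
      ((g ^ t : (M n)ˣ) : M n) w = lam * ((p : ℤ) * (g : M n) w) := by
    refine Subgroup.closure_induction
      (p := fun x _ => Kp k x ∧ ∃ lam : ℤ, ∀ w : List (Fin n), w.length = k →
        ((x : (M n)ˣ) : M n) w = lam * ((p : ℤ) * (g : M n) w)) ?_ ?_ ?_ ?_ hmem
    · intro x hx
      rcases Group.mem_conjugatesOfSet_iff.1 hx with ⟨a, ha, hconj⟩
      rw [Set.mem_singleton_iff] at ha
      subst ha
      rcases isConj_iff.1 hconj with ⟨c, rfl⟩
      have hconjlem := (hppow.1.conj hk1 c)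
      refine ⟨hconjlem.1, 1, fun w hlen => ?_⟩
      rw [hconjlem.2 w hlen, hppow.2 w hlen, one_mul]
    · refine ⟨Kp.one k, 0, fun w hlen => ?_⟩
      have hne : w ≠ [] := by intro hx; rw [hx] at hlen; simp at hlen; omega
      rw [Units.val_one, one_apply, if_neg hne, zero_mul]
    · rintro x y hx hy ⟨hxK, lamx, hlx⟩ ⟨hyK, lamy, hly⟩
      refine ⟨hxK.mul hyK, lamx + lamy, fun w hlen => ?_⟩
      rw [Kp.coeff_mul hk1 hxK hyK w hlen, hlx w hlen, hly w hlen]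
      ring
    · rintro x hx ⟨hxK, lam, hl⟩
      refine ⟨hxK.inv hk1, -lam, fun w hlen => ?_⟩
      rw [hxK.coeff_inv hk1 w hlen, hl w hlen]
      ring
  obtain ⟨-, lam, hlam⟩ := hP
  have h1 : ((g ^ t : (M n)ˣ) : M n) wk = (t : ℤ) * (g : M n) wk :=
    (hKp.pow hk1 t).2 wk hwk_len
  have h2 := hlam wk hwk_len
  rw [h1] at h2
  have h3 : (t : ℤ) = lam * (p : ℤ) := by
    have := mul_right_cancel₀ hwk (by linarith : (t : ℤ) * (g : M n) wk =
      (lam * (p : ℤ)) * (g : M n) wk)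
    exact this
  have : (p : ℤ) ∣ (t : ℤ) := ⟨lam, by linarith⟩
  exact_mod_cast this

end M

/-! ### A `ZMod p`-powers homomorphism -/

section ZModHelper

variable {G : Type*} [Group G]

/-- The homomorphism `Multiplicative (ZMod p) →* G` sending `1` to `c`, given `c ^ p = 1`. -/
def zmodPowHom (p : ℕ) (c : G) (hc : c ^ p = 1) : Multiplicative (ZMod p) →* G :=
  AddMonoidHom.toMultiplicativeLeft
    (ZMod.lift p ⟨zmultiplesHom (Additive G) (Additive.ofMul c), by
      show ((p : ℤ) • Additive.ofMul c) = 0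
      rw [← ofMul_zpow, zpow_natCast, hc]
      rfl⟩)

lemma zmodPowHom_intCast (p : ℕ) (c : G) (hc : c ^ p = 1) (z : ℤ) :
    zmodPowHom p c hc (Multiplicative.ofAdd ((z : ZMod p))) = c ^ z := by
  unfold zmodPowHom
  rw [AddMonoidHom.coe_toMultiplicativeLeft]
  show Additive.toMul (ZMod.lift p _ ((z : ZMod p))) = c ^ z
  rw [ZMod.lift_coe]
  show Additive.toMul ((z • Additive.ofMul c)) = c ^ z
  rw [← ofMul_zpow]
  rfl

lemma zmodPowHom_natCast (p : ℕ) (c : G) (hc : c ^ p = 1) (m : ℕ) :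
    zmodPowHom p c hc (Multiplicative.ofAdd ((m : ZMod p))) = c ^ m := by
  have h := zmodPowHom_intCast p c hc (m : ℤ)
  rw [zpow_natCast] at h
  rw [← h]
  norm_cast

end ZModHelper

end Case2Aux

/-- The factors of the quotient amalgam: `H̃/((r̃))` and the one-relator group
`⟨y₁,…,yₙ | uᵖ⟩`. -/
def Fac2 (n p : ℕ) (u' : FreeGroup (Fin n)) (r : FreeGroup Bool) : Bool → Type := fun i =>
  match i with
  | true => FreeGroup Bool ⧸ Subgroup.normalClosure {r}
  | false => FreeGroup (Fin n) ⧸ Subgroup.normalClosure {u' ^ p}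

instance (n p : ℕ) (u' : FreeGroup (Fin n)) (r : FreeGroup Bool) :
    (i : Bool) → Group (Fac2 n p u' r i) := fun i =>
  match i with
  | true => inferInstanceAs (Group (FreeGroup Bool ⧸ Subgroup.normalClosure {r}))
  | false => inferInstanceAs (Group (FreeGroup (Fin n) ⧸ Subgroup.normalClosure {u' ^ p}))

/-- The amalgamating maps for the quotient amalgam, identifying the image of `[xᵏ,b]` in
`H̃/((r̃))` with the image of `u⁻¹` in `⟨y₁,…,yₙ | uᵖ⟩`. -/
def amalMaps2 (k n p : ℕ) (u' : FreeGroup (Fin n)) (r : FreeGroup Bool) :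
    ∀ i : Bool, Multiplicative ℤ →* Fac2 n p u' r i := fun i =>
  match i with
  | true => zpowersHom (FreeGroup Bool ⧸ Subgroup.normalClosure {r})
      (QuotientGroup.mk (commWord k))
  | false => zpowersHom (FreeGroup (Fin n) ⧸ Subgroup.normalClosure {u' ^ p})
      (QuotientGroup.mk u'⁻¹)

namespace Case2Aux

open Monoid PushoutI

lemma zpowersHom_ofAdd_one {G : Type*} [Group G] (g : G) :
    zpowersHom G g (Multiplicative.ofAdd 1) = g := by
  rw [zpowersHom_apply, toAdd_ofAdd, zpow_one]

section PushoutConstructions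

variable (k n p : ℕ) (u' : FreeGroup (Fin n)) (r : FreeGroup Bool)

lemma amalMaps_true_apply :
    amalMaps k n u' true (Multiplicative.ofAdd 1) = commWord k := by
  show zpowersHom (FreeGroup Bool) (commWord k) (Multiplicative.ofAdd 1) = commWord k
  rw [zpowersHom_apply, toAdd_ofAdd, zpow_one]

lemma amalMaps_false_apply :
    amalMaps k n u' false (Multiplicative.ofAdd 1) = u'⁻¹ := by
  show zpowersHom (FreeGroup (Fin n)) u'⁻¹ (Multiplicative.ofAdd 1) = u'⁻¹
  rw [zpowersHom_apply, toAdd_ofAdd, zpow_one]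

lemma amalMaps2_true_apply :
    amalMaps2 k n p u' r true (Multiplicative.ofAdd 1) = QuotientGroup.mk (commWord k) := by
  show zpowersHom (FreeGroup Bool ⧸ Subgroup.normalClosure {r})
    (QuotientGroup.mk (commWord k)) (Multiplicative.ofAdd 1) = _
  rw [zpowersHom_apply, toAdd_ofAdd, zpow_one]

lemma amalMaps2_false_apply :
    amalMaps2 k n p u' r false (Multiplicative.ofAdd 1) = QuotientGroup.mk u'⁻¹ := by
  show zpowersHom (FreeGroup (Fin n) ⧸ Subgroup.normalClosure {u' ^ p})
    (QuotientGroup.mk u'⁻¹) (Multiplicative.ofAdd 1) = _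
  rw [zpowersHom_apply, toAdd_ofAdd, zpow_one]

/-- The normal closure of `r` (viewed in the amalgam). -/
abbrev NN : Subgroup (Amal k n u') :=
  Subgroup.normalClosure {Monoid.PushoutI.of (φ := amalMaps k n u') true r}

/-- Components of the forward homomorphism. -/
def fwdComp : ∀ i : Bool, Fac n i →* Monoid.PushoutI (amalMaps2 k n p u' r) := fun i =>
  match i with
  | true => (Monoid.PushoutI.of (φ := amalMaps2 k n p u' r) true).comp
      (QuotientGroup.mk' (Subgroup.normalClosure {r}))
  | false => (Monoid.PushoutI.of (φ := amalMaps2 k n p u' r) false).comp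
      (QuotientGroup.mk' (Subgroup.normalClosure {u' ^ p}))

lemma fwdComp_compat : ∀ i : Bool, (fwdComp k n p u' r i).comp (amalMaps k n u' i)
    = Monoid.PushoutI.base (amalMaps2 k n p u' r) := by
  intro i
  refine MonoidHom.ext_mint ?_
  cases i
  · rw [MonoidHom.comp_apply,
      ← Monoid.PushoutI.of_apply_eq_base (φ := amalMaps2 k n p u' r) false
        (Multiplicative.ofAdd 1), amalMaps_false_apply, amalMaps2_false_apply]
    rfl
  · rw [MonoidHom.comp_apply,
      ← Monoid.PushoutI.of_apply_eq_base (φ := amalMaps2 k n p u' r) true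
        (Multiplicative.ofAdd 1), amalMaps_true_apply, amalMaps2_true_apply]
    rfl

/-- The forward homomorphism on the amalgam. -/
def fwdHom : Amal k n u' →* Monoid.PushoutI (amalMaps2 k n p u' r) :=
  Monoid.PushoutI.lift _ _ (fwdComp_compat k n p u' r)

lemma fwdHom_of_true (a : FreeGroup Bool) :
    fwdHom k n p u' r (Monoid.PushoutI.of (φ := amalMaps k n u') true a)
      = Monoid.PushoutI.of (φ := amalMaps2 k n p u' r) true (QuotientGroup.mk a) := by
  rw [fwdHom]
  erw [Monoid.PushoutI.lift_of]

lemma fwdHom_of_false (w : FreeGroup (Fin n)) :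
    fwdHom k n p u' r (Monoid.PushoutI.of (φ := amalMaps k n u') false w)
      = Monoid.PushoutI.of (φ := amalMaps2 k n p u' r) false (QuotientGroup.mk w) := by
  rw [fwdHom]
  erw [Monoid.PushoutI.lift_of]

lemma fwd_ker : NN k n u' r ≤ (fwdHom k n p u' r).ker := by
  refine Subgroup.normalClosure_le_normal ?_
  rw [Set.singleton_subset_iff, SetLike.mem_coe, MonoidHom.mem_ker, fwdHom_of_true]
  have : (QuotientGroup.mk r : FreeGroup Bool ⧸ Subgroup.normalClosure {r}) = 1 :=
    (QuotientGroup.eq_one_iff r).2 (Subgroup.subset_normalClosure rfl)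
  rw [this]
  erw [map_one]

/-- The forward homomorphism on the quotient of the amalgam. -/
def quotFwd : (Amal k n u' ⧸ NN k n u' r) →* Monoid.PushoutI (amalMaps2 k n p u' r) :=
  QuotientGroup.lift _ (fwdHom k n p u' r) (fwd_ker k n p u' r)

lemma quotFwd_mk_of_true (a : FreeGroup Bool) :
    quotFwd k n p u' r (QuotientGroup.mk (Monoid.PushoutI.of (φ := amalMaps k n u') true a))
      = Monoid.PushoutI.of (φ := amalMaps2 k n p u' r) true (QuotientGroup.mk a) := by
  rw [quotFwd, QuotientGroup.lift_mk', fwdHom_of_true]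

lemma quotFwd_mk_of_false (w : FreeGroup (Fin n)) :
    quotFwd k n p u' r (QuotientGroup.mk (Monoid.PushoutI.of (φ := amalMaps k n u') false w))
      = Monoid.PushoutI.of (φ := amalMaps2 k n p u' r) false (QuotientGroup.mk w) := by
  rw [quotFwd, QuotientGroup.lift_mk', fwdHom_of_false]

lemma of_true_map_mem : ∀ x ∈ Subgroup.normalClosure {r},
    Monoid.PushoutI.of (φ := amalMaps k n u') true x ∈ NN k n u' r := by
  haveI : ((NN k n u' r).comap
      (Monoid.PushoutI.of (φ := amalMaps k n u') true)).Normal :=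
    Subgroup.Normal.comap inferInstance _
  intro x hx
  have hle : Subgroup.normalClosure {r} ≤
      (NN k n u' r).comap (Monoid.PushoutI.of (φ := amalMaps k n u') true) := by
    refine @Subgroup.normalClosure_le_normal _ _ _ _ this ?_
    erw [Set.singleton_subset_iff, SetLike.mem_coe, Subgroup.mem_comap]
    exact Subgroup.subset_normalClosure rfl
  exact (Subgroup.mem_comap).1 (hle hx)

lemma of_comm_eq : Monoid.PushoutI.of (φ := amalMaps k n u') true (commWord k)
    = Monoid.PushoutI.of (φ := amalMaps k n u') false u'⁻¹ := by
  have h1 := Monoid.PushoutI.of_apply_eq_base (φ := amalMaps k n u') true (Multiplicative.ofAdd 1)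
  have h2 := Monoid.PushoutI.of_apply_eq_base (φ := amalMaps k n u') false (Multiplicative.ofAdd 1)
  have e1 := amalMaps_true_apply k n u'
  have e2 := amalMaps_false_apply k n u'
  rw [e1] at h1
  rw [e2] at h2
  exact h1.trans h2.symm

lemma of_false_u_pow_mem (hp : commWord k ^ p ∈ Subgroup.normalClosure {r}) :
    Monoid.PushoutI.of (φ := amalMaps k n u') false (u' ^ p) ∈ NN k n u' r := by
  have h0 : Monoid.PushoutI.of (φ := amalMaps k n u') false u'
      = (Monoid.PushoutI.of (φ := amalMaps k n u') true (commWord k))⁻¹ := by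
    have h := of_comm_eq k n u'
    erw [map_inv] at h
    rw [h, inv_inv]
  have h3 : Monoid.PushoutI.of (φ := amalMaps k n u') false (u' ^ p)
      = (Monoid.PushoutI.of (φ := amalMaps k n u') true (commWord k ^ p))⁻¹ := by
    erw [map_pow, map_pow]
    rw [h0, inv_pow]
  rw [h3]
  exact inv_mem (of_true_map_mem k n u' r _ hp)

lemma bwd_ker_true : Subgroup.normalClosure {r} ≤
    ((QuotientGroup.mk' (NN k n u' r)).comp
      (Monoid.PushoutI.of (φ := amalMaps k n u') true)).ker := by
  refine @Subgroup.normalClosure_le_normal _ _ _ _ (MonoidHom.normal_ker _) ?_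
  erw [Set.singleton_subset_iff, SetLike.mem_coe, MonoidHom.mem_ker, MonoidHom.comp_apply,
    QuotientGroup.mk'_apply, QuotientGroup.eq_one_iff]
  exact Subgroup.subset_normalClosure rfl

lemma bwd_ker_false (hp : commWord k ^ p ∈ Subgroup.normalClosure {r}) :
    Subgroup.normalClosure {u' ^ p} ≤
    ((QuotientGroup.mk' (NN k n u' r)).comp
      (Monoid.PushoutI.of (φ := amalMaps k n u') false)).ker := by
  refine @Subgroup.normalClosure_le_normal _ _ _ _ (MonoidHom.normal_ker _) ?_
  erw [Set.singleton_subset_iff, SetLike.mem_coe, MonoidHom.mem_ker, MonoidHom.comp_apply,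
    QuotientGroup.mk'_apply, QuotientGroup.eq_one_iff]
  exact of_false_u_pow_mem k n p u' r hp

/-- The backward homomorphism on `H̃/((r̃))`. -/
def bwdTrue : (FreeGroup Bool ⧸ Subgroup.normalClosure {r}) →* (Amal k n u' ⧸ NN k n u' r) :=
  QuotientGroup.lift _ _ (bwd_ker_true k n u' r)

/-- The backward homomorphism on the one-relator group. -/
def bwdFalse (hp : commWord k ^ p ∈ Subgroup.normalClosure {r}) :
    (FreeGroup (Fin n) ⧸ Subgroup.normalClosure {u' ^ p}) →* (Amal k n u' ⧸ NN k n u' r) :=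
  QuotientGroup.lift _ _ (bwd_ker_false k n p u' r hp)

lemma bwdTrue_mk (a : FreeGroup Bool) :
    bwdTrue k n u' r (QuotientGroup.mk a)
      = QuotientGroup.mk (Monoid.PushoutI.of (φ := amalMaps k n u') true a) := by
  rw [bwdTrue]
  erw [QuotientGroup.lift_mk']
  rfl

lemma bwdFalse_mk (hp : commWord k ^ p ∈ Subgroup.normalClosure {r}) (w : FreeGroup (Fin n)) :
    bwdFalse k n p u' r hp (QuotientGroup.mk w)
      = QuotientGroup.mk (Monoid.PushoutI.of (φ := amalMaps k n u') false w) := by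
  rw [bwdFalse]
  erw [QuotientGroup.lift_mk']
  rfl

/-- Components of the backward homomorphism. -/
def bwdComp (hp : commWord k ^ p ∈ Subgroup.normalClosure {r}) :
    ∀ i : Bool, Fac2 n p u' r i →* (Amal k n u' ⧸ NN k n u' r) := fun i =>
  match i with
  | true => bwdTrue k n u' r
  | false => bwdFalse k n p u' r hp

lemma bwdComp_compat (hp : commWord k ^ p ∈ Subgroup.normalClosure {r}) :
    ∀ i : Bool, (bwdComp k n p u' r hp i).comp (amalMaps2 k n p u' r i) =
      (QuotientGroup.mk' (NN k n u' r)).comp (Monoid.PushoutI.base (amalMaps k n u')) := by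
  intro i
  refine MonoidHom.ext_mint ?_
  cases i
  · rw [MonoidHom.comp_apply, MonoidHom.comp_apply,
      ← Monoid.PushoutI.of_apply_eq_base (φ := amalMaps k n u') false (Multiplicative.ofAdd 1)]
    show bwdComp k n p u' r hp false (amalMaps2 k n p u' r false (Multiplicative.ofAdd 1)) = _
    rw [amalMaps2_false_apply, amalMaps_false_apply]
    show bwdFalse k n p u' r hp (QuotientGroup.mk u'⁻¹) = _
    rw [bwdFalse_mk]
    rfl
  · rw [MonoidHom.comp_apply, MonoidHom.comp_apply,
      ← Monoid.PushoutI.of_apply_eq_base (φ := amalMaps k n u') true (Multiplicative.ofAdd 1)]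
    show bwdComp k n p u' r hp true (amalMaps2 k n p u' r true (Multiplicative.ofAdd 1)) = _
    rw [amalMaps2_true_apply, amalMaps_true_apply]
    show bwdTrue k n u' r (QuotientGroup.mk (commWord k)) = _
    rw [bwdTrue_mk]
    rfl

/-- The backward homomorphism. -/
def bwdHom (hp : commWord k ^ p ∈ Subgroup.normalClosure {r}) :
    Monoid.PushoutI (amalMaps2 k n p u' r) →* (Amal k n u' ⧸ NN k n u' r) :=
  Monoid.PushoutI.lift _ _ (bwdComp_compat k n p u' r hp)

lemma bwdHom_of_true (hp : commWord k ^ p ∈ Subgroup.normalClosure {r}) (a : FreeGroup Bool) :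
    bwdHom k n p u' r hp
        (Monoid.PushoutI.of (φ := amalMaps2 k n p u' r) true (QuotientGroup.mk a))
      = QuotientGroup.mk (Monoid.PushoutI.of (φ := amalMaps k n u') true a) := by
  rw [bwdHom]
  erw [Monoid.PushoutI.lift_of]
  show bwdTrue k n u' r (QuotientGroup.mk a) = _
  rw [bwdTrue_mk]

lemma bwdHom_of_false (hp : commWord k ^ p ∈ Subgroup.normalClosure {r})
    (w : FreeGroup (Fin n)) :
    bwdHom k n p u' r hp
        (Monoid.PushoutI.of (φ := amalMaps2 k n p u' r) false (QuotientGroup.mk w))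
      = QuotientGroup.mk (Monoid.PushoutI.of (φ := amalMaps k n u') false w) := by
  rw [bwdHom]
  erw [Monoid.PushoutI.lift_of]
  show bwdFalse k n p u' r hp (QuotientGroup.mk w) = _
  rw [bwdFalse_mk]

lemma bwd_fwd (hp : commWord k ^ p ∈ Subgroup.normalClosure {r}) :
    (bwdHom k n p u' r hp).comp (quotFwd k n p u' r) =
      MonoidHom.id (Amal k n u' ⧸ NN k n u' r) := by
  refine QuotientGroup.monoidHom_ext (NN k n u' r) ?_
  refine Monoid.PushoutI.hom_ext_nonempty fun i => ?_
  cases i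
  · refine MonoidHom.ext fun w => ?_
    show bwdHom k n p u' r hp (quotFwd k n p u' r (QuotientGroup.mk
      (Monoid.PushoutI.of (φ := amalMaps k n u') false w))) = _
    erw [quotFwd_mk_of_false, bwdHom_of_false]
  · refine MonoidHom.ext fun a => ?_
    show bwdHom k n p u' r hp (quotFwd k n p u' r (QuotientGroup.mk
      (Monoid.PushoutI.of (φ := amalMaps k n u') true a))) = _
    erw [quotFwd_mk_of_true, bwdHom_of_true]

lemma fwd_bwd (hp : commWord k ^ p ∈ Subgroup.normalClosure {r}) :
    (quotFwd k n p u' r).comp (bwdHom k n p u' r hp) =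
      MonoidHom.id (Monoid.PushoutI (amalMaps2 k n p u' r)) := by
  refine Monoid.PushoutI.hom_ext_nonempty fun i => ?_
  cases i
  · refine QuotientGroup.monoidHom_ext (Subgroup.normalClosure {u' ^ p})
      (MonoidHom.ext fun w => ?_)
    show quotFwd k n p u' r (bwdHom k n p u' r hp
      (Monoid.PushoutI.of (φ := amalMaps2 k n p u' r) false (QuotientGroup.mk w))) = _
    rw [bwdHom_of_false, quotFwd_mk_of_false]
    rfl
  · refine QuotientGroup.monoidHom_ext (Subgroup.normalClosure {r})
      (MonoidHom.ext fun a => ?_)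
    show quotFwd k n p u' r (bwdHom k n p u' r hp
      (Monoid.PushoutI.of (φ := amalMaps2 k n p u' r) true (QuotientGroup.mk a))) = _
    rw [bwdHom_of_true, quotFwd_mk_of_true]
    rfl

/-! ### The third pushout over `ZMod p` -/

lemma commWord_mk_pow_eq_one (hp : commWord k ^ p ∈ Subgroup.normalClosure {r}) :
    (QuotientGroup.mk (commWord k) : FreeGroup Bool ⧸ Subgroup.normalClosure {r}) ^ p = 1 := by
  rw [show (QuotientGroup.mk (commWord k) : FreeGroup Bool ⧸ Subgroup.normalClosure {r})
    = QuotientGroup.mk' _ (commWord k) from rfl, ← map_pow, QuotientGroup.mk'_apply,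
    QuotientGroup.eq_one_iff]
  exact hp

lemma u_inv_mk_pow_eq_one :
    (QuotientGroup.mk u'⁻¹ : FreeGroup (Fin n) ⧸ Subgroup.normalClosure {u' ^ p}) ^ p = 1 := by
  rw [show (QuotientGroup.mk u'⁻¹ : FreeGroup (Fin n) ⧸ Subgroup.normalClosure {u' ^ p})
    = QuotientGroup.mk' _ u'⁻¹ from rfl, ← map_pow, QuotientGroup.mk'_apply,
    QuotientGroup.eq_one_iff, inv_pow]
  exact inv_mem (Subgroup.subset_normalClosure rfl)

/-- The amalgamating maps over `ZMod p`. -/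
def thirdMaps (hp : commWord k ^ p ∈ Subgroup.normalClosure {r}) :
    ∀ i : Bool, Multiplicative (ZMod p) →* Fac2 n p u' r i := fun i =>
  match i with
  | true => zmodPowHom p (QuotientGroup.mk (commWord k)) (commWord_mk_pow_eq_one k p r hp)
  | false => zmodPowHom p (QuotientGroup.mk u'⁻¹) (u_inv_mk_pow_eq_one n p u')

/-- The projection `Multiplicative ℤ →* Multiplicative (ZMod p)`. -/
def zproj (p : ℕ) : Multiplicative ℤ →* Multiplicative (ZMod p) :=
  AddMonoidHom.toMultiplicative (Int.castAddHom (ZMod p))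

lemma thirdMaps_factor (hp : commWord k ^ p ∈ Subgroup.normalClosure {r}) :
    ∀ i : Bool, (thirdMaps k n p u' r hp i).comp (zproj p) = amalMaps2 k n p u' r i := by
  intro i
  refine MonoidHom.ext_mint ?_
  cases i
  · rw [MonoidHom.comp_apply]
    have hz : (zproj p) (Multiplicative.ofAdd 1) = Multiplicative.ofAdd (((1 : ℤ) : ZMod p)) := rfl
    rw [hz]
    show zmodPowHom p (QuotientGroup.mk u'⁻¹) (u_inv_mk_pow_eq_one n p u')
        (Multiplicative.ofAdd (((1 : ℤ) : ZMod p))) = _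
    rw [zmodPowHom_intCast, zpow_one, amalMaps2_false_apply]
  · rw [MonoidHom.comp_apply]
    have hz : (zproj p) (Multiplicative.ofAdd 1) = Multiplicative.ofAdd (((1 : ℤ) : ZMod p)) := rfl
    rw [hz]
    show zmodPowHom p (QuotientGroup.mk (commWord k)) (commWord_mk_pow_eq_one k p r hp)
        (Multiplicative.ofAdd (((1 : ℤ) : ZMod p))) = _
    rw [zmodPowHom_intCast, zpow_one, amalMaps2_true_apply]

/-- Comparison map to the pushout over `ZMod p`. -/
def cmpHom (hp : commWord k ^ p ∈ Subgroup.normalClosure {r}) :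
    Monoid.PushoutI (amalMaps2 k n p u' r) →* Monoid.PushoutI (thirdMaps k n p u' r hp) :=
  Monoid.PushoutI.lift (fun i => Monoid.PushoutI.of (φ := thirdMaps k n p u' r hp) i)
    ((Monoid.PushoutI.base (thirdMaps k n p u' r hp)).comp (zproj p))
    (by
      intro i
      rw [← thirdMaps_factor k n p u' r hp i, ← MonoidHom.comp_assoc,
        Monoid.PushoutI.of_comp_eq_base])

lemma cmpHom_of (hp : commWord k ^ p ∈ Subgroup.normalClosure {r}) (i : Bool)
    (x : Fac2 n p u' r i) :
    cmpHom k n p u' r hp (Monoid.PushoutI.of (φ := amalMaps2 k n p u' r) i x)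
      = Monoid.PushoutI.of (φ := thirdMaps k n p u' r hp) i x := by
  rw [cmpHom, Monoid.PushoutI.lift_of]

/-! ### Injectivity of the `ZMod p` amalgamating maps -/

lemma thirdMaps_true_injective (hp1 : 1 ≤ p) (hp : commWord k ^ p ∈ Subgroup.normalClosure {r})
    (hpmin : ∀ q : ℕ, 1 ≤ q → commWord k ^ q ∈ Subgroup.normalClosure {r} → p ≤ q) :
    Function.Injective (thirdMaps k n p u' r hp true) := by
  haveI : NeZero p := ⟨by omega⟩
  rw [injective_iff_map_eq_one]
  intro x hx
  set v := (Multiplicative.toAdd x).val with hv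
  have hxv : x = Multiplicative.ofAdd (((v : ℤ) : ZMod p)) := by
    have h1 : ((v : ℕ) : ZMod p) = Multiplicative.toAdd x :=
      ZMod.natCast_rightInverse (Multiplicative.toAdd x)
    have h2 : (((v : ℤ)) : ZMod p) = Multiplicative.toAdd x := by
      rw [← h1]; push_cast; ring
    conv_lhs => rw [show x = Multiplicative.ofAdd (Multiplicative.toAdd x) from rfl]
    rw [h2]
  rw [hxv] at hx
  have hx' : zmodPowHom p (QuotientGroup.mk (commWord k)) (commWord_mk_pow_eq_one k p r hp)
      (Multiplicative.ofAdd (((v : ℤ) : ZMod p))) = 1 := hx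
  rw [zmodPowHom_intCast, zpow_natCast] at hx'
  have hmem : commWord k ^ v ∈ Subgroup.normalClosure {r} := by
    rw [show ((QuotientGroup.mk (commWord k) : FreeGroup Bool ⧸ Subgroup.normalClosure {r}))
      = QuotientGroup.mk' _ (commWord k) from rfl, ← map_pow, QuotientGroup.mk'_apply,
      QuotientGroup.eq_one_iff] at hx'
    exact hx'
  have hv0 : v = 0 := by
    by_contra hne
    have := hpmin v (by omega) hmem
    have hlt : v < p := ZMod.val_lt (Multiplicative.toAdd x)
    omega
  rw [hxv, hv0]
  norm_num

lemma thirdMaps_false_injective (hu : u' ≠ 1) (hp1 : 1 ≤ p)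
    (hp : commWord k ^ p ∈ Subgroup.normalClosure {r}) :
    Function.Injective (thirdMaps k n p u' r hp false) := by
  haveI : NeZero p := ⟨by omega⟩
  rw [injective_iff_map_eq_one]
  intro x hx
  set v := (Multiplicative.toAdd x).val with hv
  have hxv : x = Multiplicative.ofAdd (((v : ℤ) : ZMod p)) := by
    have h1 : ((v : ℕ) : ZMod p) = Multiplicative.toAdd x :=
      ZMod.natCast_rightInverse (Multiplicative.toAdd x)
    have h2 : (((v : ℤ)) : ZMod p) = Multiplicative.toAdd x := by
      rw [← h1]; push_cast; ring
    conv_lhs => rw [show x = Multiplicative.ofAdd (Multiplicative.toAdd x) from rfl]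
    rw [h2]
  rw [hxv] at hx
  have hx' : zmodPowHom p (QuotientGroup.mk u'⁻¹) (u_inv_mk_pow_eq_one n p u')
      (Multiplicative.ofAdd (((v : ℤ) : ZMod p))) = 1 := hx
  rw [zmodPowHom_intCast, zpow_natCast] at hx'
  have hmem : u' ^ v ∈ Subgroup.normalClosure {u' ^ p} := by
    rw [show ((QuotientGroup.mk u'⁻¹ : FreeGroup (Fin n) ⧸ Subgroup.normalClosure {u' ^ p}))
      = QuotientGroup.mk' _ u'⁻¹ from rfl, ← map_pow, QuotientGroup.mk'_apply,
      QuotientGroup.eq_one_iff, inv_pow] at hx'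
    have := inv_mem hx'
    rwa [inv_inv] at this
  have hdvd : p ∣ v := M.key_dvd u' hu p v hmem
  have hlt : v < p := ZMod.val_lt (Multiplicative.toAdd x)
  have hv0 : v = 0 := by
    rcases hdvd with ⟨c, hc⟩
    rcases Nat.eq_zero_or_pos c with rfl | hcpos
    · omega
    · nlinarith
  rw [hxv, hv0]
  norm_num

end PushoutConstructions

end Case2Aux

/-- Case 2 of Section 5.2: if `p ≥ 1` is minimal with `[xᵏ,b]ᵖ ∈ ((r̃))`, then
`H/⟨⟨r̃⟩⟩ ≅ H̃/((r̃)) *_{[xᵏ,b]=u⁻¹} ⟨y₁,…,yₙ | uᵖ⟩` (canonically), and in particular the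
natural map `H̃/((r̃)) → H/⟨⟨r̃⟩⟩` is injective. -/
theorem case2_decomposition (k n : ℕ) (hk : 1 ≤ k) (hn : 1 ≤ n)
    (u' : FreeGroup (Fin n)) (hu : u' ≠ 1)
    (r : FreeGroup Bool) (p : ℕ) (hp1 : 1 ≤ p)
    (hp : commWord k ^ p ∈ Subgroup.normalClosure {r})
    (hpmin : ∀ q : ℕ, 1 ≤ q → commWord k ^ q ∈ Subgroup.normalClosure {r} → p ≤ q) :
    (∃ e : (Amal k n u' ⧸ Subgroup.normalClosure
          {Monoid.PushoutI.of (φ := amalMaps k n u') true r}) ≃*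
        Monoid.PushoutI (amalMaps2 k n p u' r),
      (∀ a : FreeGroup Bool,
        e (QuotientGroup.mk (Monoid.PushoutI.of (φ := amalMaps k n u') true a)) =
          Monoid.PushoutI.of (φ := amalMaps2 k n p u' r) true (QuotientGroup.mk a)) ∧
      (∀ w : FreeGroup (Fin n),
        e (QuotientGroup.mk (Monoid.PushoutI.of (φ := amalMaps k n u') false w)) =
          Monoid.PushoutI.of (φ := amalMaps2 k n p u' r) false (QuotientGroup.mk w))) ∧
    (∀ a : FreeGroup Bool,
      Monoid.PushoutI.of (φ := amalMaps k n u') true a ∈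
        Subgroup.normalClosure {Monoid.PushoutI.of (φ := amalMaps k n u') true r} →
      a ∈ Subgroup.normalClosure {r}) := by
  constructor
  · refine ⟨(Case2Aux.quotFwd k n p u' r).toMulEquiv (Case2Aux.bwdHom k n p u' r hp)
      (Case2Aux.bwd_fwd k n p u' r hp) (Case2Aux.fwd_bwd k n p u' r hp), ?_, ?_⟩
    · intro a
      exact Case2Aux.quotFwd_mk_of_true k n p u' r a
    · intro w
      exact Case2Aux.quotFwd_mk_of_false k n p u' r w
  · intro a ha
    have h1 : (QuotientGroup.mk (Monoid.PushoutI.of (φ := amalMaps k n u') true a) :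
        Amal k n u' ⧸ Case2Aux.NN k n u' r) = 1 :=
      (QuotientGroup.eq_one_iff _).2 ha
    have h2 : Monoid.PushoutI.of (φ := amalMaps2 k n p u' r) true (QuotientGroup.mk a) = 1 := by
      rw [← Case2Aux.quotFwd_mk_of_true k n p u' r a, h1, map_one]
    have h3 : Monoid.PushoutI.of (φ := Case2Aux.thirdMaps k n p u' r hp) true
        (QuotientGroup.mk a) = 1 := by
      rw [← Case2Aux.cmpHom_of k n p u' r hp true (QuotientGroup.mk a), h2, map_one]
    have hinj : Function.Injective
        (Monoid.PushoutI.of (φ := Case2Aux.thirdMaps k n p u' r hp) true) :=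
      Monoid.PushoutI.of_injective (fun i => by
        cases i
        · exact Case2Aux.thirdMaps_false_injective k n p u' r hu hp1 hp
        · exact Case2Aux.thirdMaps_true_injective k n p u' r hp1 hp hpmin) true
    have h4 : (QuotientGroup.mk a : FreeGroup Bool ⧸ Subgroup.normalClosure {r}) = 1 :=
      hinj (by rw [h3]; erw [map_one])
    exact (QuotientGroup.eq_one_iff a).1 h4
end
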